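/- arXiv:1201.6580 — 10 statements merged into one kernel-verified Lean document; each statement's English description precedes it below -/
import Mathlib

section
/- For every natural number n, the number of permutations π of Fin n that avoid the pattern 312 (i.e., such that there are no indices i < j < k with π j < π k < π i) equals the n-th Catalan number. -/
/-- A permutation of `Fin n` avoids the pattern 312 if there are no indices
`i < j < k` with `π j < π k < π i`. -/
def Avoids312 {n : ℕ} (π : Equiv.Perm (Fin n)) : Prop :=
  ∀ i j k : Fin n, i < j → j < k → ¬(π j < π k ∧ π k < π i)

namespace Av312

open Equiv Finset

/-- Raw gluing function: `σ` shifted up by 1 on positions `< m`, value 0 at position `m`,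
`τ` shifted up by `m+1` on positions `> m`. -/
def glueFun (n m : ℕ) (hm : m ≤ n) (σ : Perm (Fin m)) (τ : Perm (Fin (n - m)))
    (i : Fin (n + 1)) : Fin (n + 1) :=
  if h : i.val < m then
    ⟨(σ ⟨i, h⟩).val + 1, by have := (σ ⟨i, h⟩).isLt; have := i.isLt; omega⟩
  else if h2 : i.val = m then ⟨0, by omega⟩
  else
    ⟨(τ ⟨i.val - (m + 1), by have := i.isLt; omega⟩).val + m + 1, by
      have := (τ ⟨i.val - (m + 1), by have := i.isLt; omega⟩).isLt
      have := i.isLt; omega⟩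

lemma glueFun_lt {n m : ℕ} (hm : m ≤ n) (σ : Perm (Fin m)) (τ : Perm (Fin (n - m)))
    {i : Fin (n + 1)} (h : i.val < m) :
    (glueFun n m hm σ τ i).val = (σ ⟨i, h⟩).val + 1 := by
  simp [glueFun, h]

lemma glueFun_eq {n m : ℕ} (hm : m ≤ n) (σ : Perm (Fin m)) (τ : Perm (Fin (n - m)))
    {i : Fin (n + 1)} (h : i.val = m) :
    (glueFun n m hm σ τ i).val = 0 := by
  simp [glueFun, h]

lemma glueFun_gt {n m : ℕ} (hm : m ≤ n) (σ : Perm (Fin m)) (τ : Perm (Fin (n - m)))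
    {i : Fin (n + 1)} (h : m < i.val) :
    (glueFun n m hm σ τ i).val
      = (τ ⟨i.val - (m + 1), by have := i.isLt; omega⟩).val + m + 1 := by
  have h1 : ¬ i.val < m := by omega
  have h2 : ¬ i.val = m := by omega
  simp [glueFun, h1, h2]

lemma glueFun_injective (n m : ℕ) (hm : m ≤ n) (σ : Perm (Fin m)) (τ : Perm (Fin (n - m))) :
    Function.Injective (glueFun n m hm σ τ) := by
  intro a b hab
  have hab' : (glueFun n m hm σ τ a).val = (glueFun n m hm σ τ b).val := congrArg Fin.val hab
  rcases lt_trichotomy a.val m with ha | ha | ha <;>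
    rcases lt_trichotomy b.val m with hb | hb | hb
  · rw [glueFun_lt hm σ τ ha, glueFun_lt hm σ τ hb] at hab'
    have : σ ⟨a, ha⟩ = σ ⟨b, hb⟩ := Fin.ext (by omega)
    have h3 := congrArg Fin.val (σ.injective this)
    exact Fin.ext (by simpa using h3)
  · rw [glueFun_lt hm σ τ ha, glueFun_eq hm σ τ hb] at hab'; omega
  · rw [glueFun_lt hm σ τ ha, glueFun_gt hm σ τ hb] at hab'
    have := (σ ⟨a, ha⟩).isLt; omega
  · rw [glueFun_eq hm σ τ ha, glueFun_lt hm σ τ hb] at hab'; omega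
  · exact Fin.ext (by omega)
  · rw [glueFun_eq hm σ τ ha, glueFun_gt hm σ τ hb] at hab'; omega
  · rw [glueFun_gt hm σ τ ha, glueFun_lt hm σ τ hb] at hab'
    have := (σ ⟨b, hb⟩).isLt; omega
  · rw [glueFun_gt hm σ τ ha, glueFun_eq hm σ τ hb] at hab'; omega
  · rw [glueFun_gt hm σ τ ha, glueFun_gt hm σ τ hb] at hab'
    have : (τ ⟨a.val - (m+1), by have := a.isLt; omega⟩)
        = (τ ⟨b.val - (m+1), by have := b.isLt; omega⟩) := Fin.ext (by omega)
    have h3 := congrArg Fin.val (τ.injective this)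
    simp only [] at h3
    exact Fin.ext (by omega)

/-- Glue two permutations into a permutation of `Fin (n+1)`. -/
noncomputable def glue (n m : ℕ) (hm : m ≤ n) (σ : Perm (Fin m)) (τ : Perm (Fin (n - m))) : Perm (Fin (n + 1)) :=
  Equiv.ofBijective _ (Finite.injective_iff_bijective.mp (glueFun_injective n m hm σ τ))

lemma glue_apply (n m : ℕ) (hm : m ≤ n) (σ : Perm (Fin m)) (τ : Perm (Fin (n - m))) (i : Fin (n + 1)) :
    glue n m hm σ τ i = glueFun n m hm σ τ i := rfl

lemma glue_avoids {n m : ℕ} {hm : m ≤ n} {σ : Perm (Fin m)} {τ : Perm (Fin (n - m))}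
    (hσ : Avoids312 σ) (hτ : Avoids312 τ) : Avoids312 (glue n m hm σ τ) := by
  rintro i j k hij hjk ⟨h1, h2⟩
  rw [Fin.lt_def] at hij hjk h1 h2
  simp only [glue_apply] at h1 h2
  rcases lt_trichotomy k.val m with hk | hk | hk
  · -- all three in left block
    have hj : j.val < m := by omega
    have hi : i.val < m := by omega
    rw [glueFun_lt hm σ τ hj, glueFun_lt hm σ τ hk] at h1
    rw [glueFun_lt hm σ τ hk, glueFun_lt hm σ τ hi] at h2
    exact hσ ⟨i, hi⟩ ⟨j, hj⟩ ⟨k, hk⟩ (Fin.mk_lt_mk.mpr hij) (Fin.mk_lt_mk.mpr hjk)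
      ⟨by rw [Fin.lt_def]; omega, by rw [Fin.lt_def]; omega⟩
  · -- k is the pivot : π k = 0, impossible since π j < π k
    rw [glueFun_eq hm σ τ hk] at h1; omega
  · rcases lt_trichotomy j.val m with hj | hj | hj
    · -- i, j left, k right : π k > m ≥ π i, contradicts π k < π i
      have hi : i.val < m := by omega
      rw [glueFun_gt hm σ τ hk, glueFun_lt hm σ τ hi] at h2
      have := (σ ⟨i, hi⟩).isLt; omega
    · -- j pivot : π j = 0 < π k, need π k < π i with i left
      have hi : i.val < m := by omega
      rw [glueFun_gt hm σ τ hk, glueFun_lt hm σ τ hi] at h2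
      have := (σ ⟨i, hi⟩).isLt; omega
    · rcases lt_trichotomy i.val m with hi | hi | hi
      · rw [glueFun_gt hm σ τ hk, glueFun_lt hm σ τ hi] at h2
        have := (σ ⟨i, hi⟩).isLt; omega
      · rw [glueFun_gt hm σ τ hk, glueFun_eq hm σ τ hi] at h2; omega
      · -- all right
        rw [glueFun_gt hm σ τ hj, glueFun_gt hm σ τ hk] at h1
        rw [glueFun_gt hm σ τ hk, glueFun_gt hm σ τ hi] at h2
        exact hτ ⟨i.val - (m+1), by have := i.isLt; omega⟩
          ⟨j.val - (m+1), by have := j.isLt; omega⟩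
          ⟨k.val - (m+1), by have := k.isLt; omega⟩
          (Fin.mk_lt_mk.mpr (by omega)) (Fin.mk_lt_mk.mpr (by omega))
          ⟨by rw [Fin.lt_def]; omega, by rw [Fin.lt_def]; omega⟩

/-! ### Cardinality helpers -/

def ltEquiv (N c : ℕ) (h : c ≤ N) : {x : Fin N // x.val < c} ≃ Fin c where
  toFun x := ⟨x.1.val, x.2⟩
  invFun y := ⟨⟨y.val, by omega⟩, y.isLt⟩
  left_inv x := by ext; rfl
  right_inv y := rfl

def gtEquiv (N c : ℕ) : {x : Fin (N + 1) // c < x.val} ≃ Fin (N - c) where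
  toFun x := ⟨x.1.val - (c + 1), by have := x.1.isLt; have := x.2; omega⟩
  invFun y := ⟨⟨y.val + c + 1, by have := y.isLt; omega⟩, by show c < y.val + c + 1; omega⟩
  left_inv x := by ext; have := x.2; show x.1.val - (c+1) + c + 1 = x.1.val; omega
  right_inv y := by ext; show y.val + c + 1 - (c + 1) = y.val; omega

lemma card_lt (N c : ℕ) (h : c ≤ N) : Fintype.card {x : Fin N // x.val < c} = c := by
  rw [Fintype.card_congr (ltEquiv N c h), Fintype.card_fin]

lemma card_gt (N c : ℕ) : Fintype.card {x : Fin (N + 1) // c < x.val} = N - c := by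
  rw [Fintype.card_congr (gtEquiv N c), Fintype.card_fin]

/-! ### Splitting a 312-avoiding permutation at the position of the value 0 -/

section Split

variable {n : ℕ} {π : Equiv.Perm (Fin (n + 1))} {m : Fin (n + 1)}

lemma ne_zero_of_ne (hπ0 : π m = 0) {i : Fin (n + 1)} (hi : i ≠ m) : (π i).val ≠ 0 := by
  intro h
  exact hi (π.injective (by rw [hπ0]; exact Fin.ext h))

lemma cross_lt (hπ : Avoids312 π) (hπ0 : π m = 0) {i k : Fin (n + 1)}
    (hi : i.val < m.val) (hk : m.val < k.val) : (π i).val < (π k).val := by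
  by_contra hc
  have hik : (π k).val ≠ (π i).val := fun h => by
    have := π.injective (Fin.ext h); omega
  have hk0 : (π k).val ≠ 0 := ne_zero_of_ne hπ0 (by intro h; rw [h] at hk; omega)
  exact hπ i m k (Fin.lt_def.mpr hi) (Fin.lt_def.mpr hk)
    ⟨Fin.lt_def.mpr (by rw [hπ0]; simpa using Nat.pos_of_ne_zero hk0),
     Fin.lt_def.mpr (by omega)⟩

lemma left_le (hπ : Avoids312 π) (hπ0 : π m = 0) {i : Fin (n + 1)}
    (hi : i.val ≤ m.val) : (π i).val ≤ m.val := by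
  rcases Nat.lt_or_ge i.val m.val with hi' | hi'
  · -- counting: the n - m values at positions > m are all > π i
    by_contra hc
    push_neg at hc
    have key : Fintype.card {k : Fin (n + 1) // m.val < k.val}
        ≤ Fintype.card {x : Fin (n + 1) // (π i).val < x.val} := by
      apply Fintype.card_le_of_injective
        (fun k => ⟨π k.1, cross_lt hπ hπ0 hi' k.2⟩)
      intro a b hab
      exact Subtype.ext (π.injective (Subtype.ext_iff.mp hab))
    rw [card_gt, card_gt] at key
    have := (π i).isLt
    have := m.isLt
    omega
  · have : i = m := Fin.ext (by omega)
    rw [this, hπ0]; simp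

lemma right_ge (hπ : Avoids312 π) (hπ0 : π m = 0) {k : Fin (n + 1)}
    (hk : m.val < k.val) : m.val < (π k).val := by
  have hk0 : (π k).val ≠ 0 := ne_zero_of_ne hπ0 (by intro h; rw [h] at hk; omega)
  have key : Fintype.card {i : Fin (n + 1) // i.val < m.val + 1}
      ≤ Fintype.card {x : Fin (n + 1) // x.val < (π k).val} := by
    apply Fintype.card_le_of_injective
      (fun i => ⟨π i.1, by
        rcases Nat.lt_or_ge i.1.val m.val with h | h
        · exact cross_lt hπ hπ0 h hk
        · have : i.1 = m := Fin.ext (by have := i.2; omega)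
          rw [this, hπ0]; simpa using Nat.pos_of_ne_zero hk0⟩)
    intro a b hab
    exact Subtype.ext (π.injective (Subtype.ext_iff.mp hab))
  rw [card_lt _ _ (by have := m.isLt; omega), card_lt _ _ (by have := (π k).isLt; omega)] at key
  omega

/-- The left part of the split. -/
def sigmaFun (π : Equiv.Perm (Fin (n + 1))) (m : Fin (n + 1)) (hπ : Avoids312 π)
    (hπ0 : π m = 0) : Fin m.val → Fin m.val := fun i =>
  ⟨(π ⟨i.val, by have := m.isLt; omega⟩).val - 1, by
    have h1 : (π ⟨i.val, by have := m.isLt; omega⟩).val ≤ m.val :=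
      left_le hπ hπ0 (by simpa using le_of_lt i.isLt)
    have h2 : (π ⟨i.val, by have := m.isLt; omega⟩).val ≠ 0 :=
      ne_zero_of_ne hπ0 (by intro h; have h' := congrArg Fin.val h; simp at h'; have := i.isLt; omega)
    have := i.isLt; omega⟩

/-- The right part of the split. -/
def tauFun (π : Equiv.Perm (Fin (n + 1))) (m : Fin (n + 1)) (hπ : Avoids312 π)
    (hπ0 : π m = 0) : Fin (n - m.val) → Fin (n - m.val) := fun j =>
  ⟨(π ⟨m.val + 1 + j.val, by have := j.isLt; omega⟩).val - (m.val + 1), by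
    have h1 : m.val < (π ⟨m.val + 1 + j.val, by have := j.isLt; omega⟩).val :=
      right_ge hπ hπ0 (by simp; omega)
    have := (π ⟨m.val + 1 + j.val, by have := j.isLt; omega⟩).isLt
    omega⟩

lemma sigmaFun_injective (π : Equiv.Perm (Fin (n + 1))) (m : Fin (n + 1)) (hπ : Avoids312 π)
    (hπ0 : π m = 0) : Function.Injective (sigmaFun π m hπ hπ0) := by
  intro a b hab
  have hab' := congrArg Fin.val hab
  simp only [sigmaFun] at hab'
  have ha : (π ⟨a.val, by have := m.isLt; have := a.isLt; omega⟩).val ≠ 0 :=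
    ne_zero_of_ne hπ0 (by intro h; have h' := congrArg Fin.val h; simp at h'; have := a.isLt; omega)
  have hb : (π ⟨b.val, by have := m.isLt; have := b.isLt; omega⟩).val ≠ 0 :=
    ne_zero_of_ne hπ0 (by intro h; have h' := congrArg Fin.val h; simp at h'; have := b.isLt; omega)
  have : (π ⟨a.val, by have := m.isLt; have := a.isLt; omega⟩)
       = (π ⟨b.val, by have := m.isLt; have := b.isLt; omega⟩) := Fin.ext (by omega)
  have := congrArg Fin.val (π.injective this)
  simp only at this
  exact Fin.ext this

lemma tauFun_injective (π : Equiv.Perm (Fin (n + 1))) (m : Fin (n + 1)) (hπ : Avoids312 π)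
    (hπ0 : π m = 0) : Function.Injective (tauFun π m hπ hπ0) := by
  intro a b hab
  have hab' := congrArg Fin.val hab
  simp only [tauFun] at hab'
  have ha : m.val < (π ⟨m.val + 1 + a.val, by have := a.isLt; omega⟩).val :=
    right_ge hπ hπ0 (by simp; omega)
  have hb : m.val < (π ⟨m.val + 1 + b.val, by have := b.isLt; omega⟩).val :=
    right_ge hπ hπ0 (by simp; omega)
  have : (π ⟨m.val + 1 + a.val, by have := a.isLt; omega⟩)
       = (π ⟨m.val + 1 + b.val, by have := b.isLt; omega⟩) := Fin.ext (by omega)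
  have := congrArg Fin.val (π.injective this)
  simp only at this
  exact Fin.ext (by omega)

/-- The left part as a permutation. -/
noncomputable def sigmaPerm (π : Equiv.Perm (Fin (n + 1))) (m : Fin (n + 1))
    (hπ : Avoids312 π) (hπ0 : π m = 0) : Equiv.Perm (Fin m.val) :=
  Equiv.ofBijective _ (Finite.injective_iff_bijective.mp (sigmaFun_injective π m hπ hπ0))

/-- The right part as a permutation. -/
noncomputable def tauPerm (π : Equiv.Perm (Fin (n + 1))) (m : Fin (n + 1))
    (hπ : Avoids312 π) (hπ0 : π m = 0) : Equiv.Perm (Fin (n - m.val)) :=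
  Equiv.ofBijective _ (Finite.injective_iff_bijective.mp (tauFun_injective π m hπ hπ0))

lemma sigmaPerm_avoids (π : Equiv.Perm (Fin (n + 1))) (m : Fin (n + 1))
    (hπ : Avoids312 π) (hπ0 : π m = 0) : Avoids312 (sigmaPerm π m hπ hπ0) := by
  rintro i j k hij hjk ⟨h1, h2⟩
  rw [Fin.lt_def] at hij hjk h1 h2
  simp only [sigmaPerm, Equiv.ofBijective_apply, sigmaFun] at h1 h2
  have hm := m.isLt
  have hjne : (π ⟨j.val, by have := j.isLt; omega⟩).val ≠ 0 :=
    ne_zero_of_ne hπ0 (by intro h; have h' := congrArg Fin.val h; simp at h'; have := j.isLt; omega)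
  have hkne : (π ⟨k.val, by have := k.isLt; omega⟩).val ≠ 0 :=
    ne_zero_of_ne hπ0 (by intro h; have h' := congrArg Fin.val h; simp at h'; have := k.isLt; omega)
  exact hπ ⟨i.val, by have := i.isLt; omega⟩ ⟨j.val, by have := j.isLt; omega⟩
    ⟨k.val, by have := k.isLt; omega⟩
    (Fin.mk_lt_mk.mpr hij) (Fin.mk_lt_mk.mpr hjk)
    ⟨Fin.lt_def.mpr (by omega), Fin.lt_def.mpr (by omega)⟩

lemma tauPerm_avoids (π : Equiv.Perm (Fin (n + 1))) (m : Fin (n + 1))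
    (hπ : Avoids312 π) (hπ0 : π m = 0) : Avoids312 (tauPerm π m hπ hπ0) := by
  rintro i j k hij hjk ⟨h1, h2⟩
  rw [Fin.lt_def] at hij hjk h1 h2
  simp only [tauPerm, Equiv.ofBijective_apply, tauFun] at h1 h2
  have hjge : m.val < (π ⟨m.val + 1 + j.val, by have := j.isLt; omega⟩).val :=
    right_ge hπ hπ0 (by simp; omega)
  have hkge : m.val < (π ⟨m.val + 1 + k.val, by have := k.isLt; omega⟩).val :=
    right_ge hπ hπ0 (by simp; omega)
  have hige : m.val < (π ⟨m.val + 1 + i.val, by have := i.isLt; omega⟩).val :=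
    right_ge hπ hπ0 (by simp; omega)
  exact hπ ⟨m.val + 1 + i.val, by have := i.isLt; omega⟩
    ⟨m.val + 1 + j.val, by have := j.isLt; omega⟩
    ⟨m.val + 1 + k.val, by have := k.isLt; omega⟩
    (Fin.mk_lt_mk.mpr (by omega)) (Fin.mk_lt_mk.mpr (by omega))
    ⟨Fin.lt_def.mpr (by omega), Fin.lt_def.mpr (by omega)⟩

end Split

/-! ### The bijection -/

abbrev Targ (n : ℕ) : Type :=
  Σ m : Fin (n + 1), {σ : Equiv.Perm (Fin m.val) // Avoids312 σ} ×
    {τ : Equiv.Perm (Fin (n - m.val)) // Avoids312 τ}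

noncomputable def toPerm (n : ℕ) : Targ n → {π : Equiv.Perm (Fin (n + 1)) // Avoids312 π} :=
  fun x => ⟨glue n x.1.val x.1.is_le x.2.1.1 x.2.2.1, glue_avoids x.2.1.2 x.2.2.2⟩

set_option maxHeartbeats 1600000 in
lemma toPerm_injective (n : ℕ) : Function.Injective (toPerm n) := by
  rintro ⟨m, ⟨σ, hσ⟩, ⟨τ, hτ⟩⟩ ⟨m', ⟨σ', hσ'⟩, ⟨τ', hτ'⟩⟩ h
  have hg : glue n m.val m.is_le σ τ = glue n m'.val m'.is_le σ' τ' :=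
    congrArg Subtype.val h
  have hmm' : m.val = m'.val := by
    by_contra hne
    have hv : (glue n m.val m.is_le σ τ m).val = (glue n m'.val m'.is_le σ' τ' m).val := by
      rw [hg]
    rw [glue_apply, glue_apply, glueFun_eq m.is_le σ τ rfl] at hv
    rcases Nat.lt_or_ge m.val m'.val with hlt | hge
    · rw [glueFun_lt m'.is_le σ' τ' hlt] at hv; omega
    · have hgt : m'.val < m.val := by omega
      rw [glueFun_gt m'.is_le σ' τ' hgt] at hv; omega
  have hm : m = m' := Fin.ext hmm'
  subst hm
  have hστ : σ = σ' := by
    apply Equiv.ext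
    intro i
    apply Fin.ext
    have hi : ((⟨i.val, by have := i.isLt; have := m.isLt; omega⟩ : Fin (n+1))).val < m.val :=
      i.isLt
    have hv : (glue n m.val m.is_le σ τ ⟨i.val, by have := i.isLt; have := m.isLt; omega⟩).val
        = (glue n m.val m.is_le σ' τ' ⟨i.val, by have := i.isLt; have := m.isLt; omega⟩).val := by
      rw [hg]
    rw [glue_apply, glue_apply, glueFun_lt m.is_le σ τ hi, glueFun_lt m.is_le σ' τ' hi] at hv
    simp only [Fin.eta] at hv
    omega
  have hττ : τ = τ' := by
    apply Equiv.ext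
    intro j
    apply Fin.ext
    have hmn := m.isLt
    have hjlt := j.isLt
    have hj : m.val < ((⟨m.val + 1 + j.val, by omega⟩ : Fin (n+1))).val := by
      show m.val < m.val + 1 + j.val; omega
    have hv : (glue n m.val m.is_le σ τ ⟨m.val + 1 + j.val, by omega⟩).val
        = (glue n m.val m.is_le σ' τ' ⟨m.val + 1 + j.val, by omega⟩).val :=
      congrArg Fin.val (DFunLike.congr_fun hg _)
    simp only [glue_apply] at hv
    rw [glueFun_gt m.is_le σ τ hj, glueFun_gt m.is_le σ' τ' hj] at hv
    have he : (⟨(⟨m.val + 1 + j.val, by omega⟩ : Fin (n+1)).val - (m.val + 1), by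
        have := (⟨m.val + 1 + j.val, by omega⟩ : Fin (n+1)).isLt; omega⟩ : Fin (n - m.val)) = j :=
      Fin.ext (by show m.val + 1 + j.val - (m.val + 1) = j.val; omega)
    rw [he] at hv
    omega
  clear hg
  subst hστ; subst hττ; rfl

lemma toPerm_surjective (n : ℕ) : Function.Surjective (toPerm n) := by
  rintro ⟨π, hπ⟩
  have hπ0 : π (π.symm 0) = 0 := π.apply_symm_apply 0
  refine ⟨⟨π.symm 0, ⟨sigmaPerm π (π.symm 0) hπ hπ0, sigmaPerm_avoids π _ hπ hπ0⟩,
    ⟨tauPerm π (π.symm 0) hπ hπ0, tauPerm_avoids π _ hπ hπ0⟩⟩, ?_⟩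
  set m : Fin (n + 1) := π.symm 0 with hm
  apply Subtype.ext
  apply Equiv.ext
  intro i
  apply Fin.ext
  show (glue n m.val m.is_le _ _ i).val = (π i).val
  rw [glue_apply]
  rcases lt_trichotomy i.val m.val with hi | hi | hi
  · rw [glueFun_lt m.is_le _ _ hi]
    simp only [sigmaPerm, Equiv.ofBijective_apply, sigmaFun]
    have hne : (π i).val ≠ 0 := ne_zero_of_ne hπ0 (by intro h; rw [h] at hi; omega)
    have heq : (⟨(⟨i.val, hi⟩ : Fin m.val).val, by have := m.isLt; omega⟩ : Fin (n + 1)) = i :=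
      Fin.ext rfl
    rw [heq]
    omega
  · have : i = m := Fin.ext hi
    rw [glueFun_eq m.is_le _ _ hi, this, hπ0]; rfl
  · rw [glueFun_gt m.is_le _ _ hi]
    simp only [tauPerm, Equiv.ofBijective_apply, tauFun]
    have hge : m.val < (π i).val := right_ge hπ hπ0 hi
    have heq : (⟨m.val + 1 + (⟨i.val - (m.val + 1), by have := i.isLt; omega⟩ :
        Fin (n - m.val)).val, by have := i.isLt; omega⟩ : Fin (n + 1)) = i :=
      Fin.ext (by show m.val + 1 + (i.val - (m.val + 1)) = i.val; omega)
    rw [heq]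
    omega

lemma card_targ (n : ℕ) : Nat.card (Targ n)
    = ∑ m : Fin (n + 1), Nat.card {σ : Equiv.Perm (Fin m.val) // Avoids312 σ} *
        Nat.card {τ : Equiv.Perm (Fin (n - m.val)) // Avoids312 τ} := by
  letI I1 : ∀ m : Fin (n + 1), Fintype {σ : Equiv.Perm (Fin m.val) // Avoids312 σ} :=
    fun m => Fintype.ofFinite _
  letI I2 : ∀ m : Fin (n + 1), Fintype {τ : Equiv.Perm (Fin (n - m.val)) // Avoids312 τ} :=
    fun m => Fintype.ofFinite _
  rw [Nat.card_eq_fintype_card]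
  rw [Fintype.card_sigma]
  refine Finset.sum_congr rfl fun m _ => ?_
  rw [Fintype.card_prod, Nat.card_eq_fintype_card, Nat.card_eq_fintype_card]

lemma card_glue (n : ℕ) :
    Nat.card {π : Equiv.Perm (Fin (n + 1)) // Avoids312 π}
      = ∑ m : Fin (n + 1), Nat.card {σ : Equiv.Perm (Fin m.val) // Avoids312 σ} *
          Nat.card {τ : Equiv.Perm (Fin (n - m.val)) // Avoids312 τ} := by
  rw [← Nat.card_eq_of_bijective (toPerm n) ⟨toPerm_injective n, toPerm_surjective n⟩]
  exact card_targ n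

theorem main (n : ℕ) :
    Nat.card {π : Equiv.Perm (Fin n) // Avoids312 π} = catalan n := by
  induction n using Nat.strong_induction_on with
  | _ n ih =>
    match n with
    | 0 =>
      haveI : Unique {π : Equiv.Perm (Fin 0) // Avoids312 π} :=
        { default := ⟨1, fun i _ _ _ _ => i.elim0⟩
          uniq := fun a => Subtype.ext (Equiv.ext fun i => i.elim0) }
      rw [Nat.card_unique, catalan_zero]
    | (k + 1) =>
      rw [catalan_succ, card_glue k]
      exact Finset.sum_congr rfl fun m _ => by
        rw [ih m.val (by have := m.isLt; omega), ih (k - m.val) (by omega)]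

end Av312

theorem card_avoids312_eq_catalan (n : ℕ) :
    Nat.card {π : Equiv.Perm (Fin n) // Avoids312 π} = catalan n := by
  exact Av312.main n
end

section
/- For every natural number n, the number of permutations π of Fin n that avoid the pattern 321 (i.e., such that there are no indices i < j < k with π i > π j > π k) equals the n-th Catalan number. -/
/-- A permutation of `Fin n` avoids the pattern 321 if there are no indices
`i < j < k` with `π i > π j > π k`. -/
def Avoids321 {n : ℕ} (π : Equiv.Perm (Fin n)) : Prop :=
  ∀ i j k : Fin n, i < j → j < k → ¬(π j < π i ∧ π k < π j)

open Finset List DyckStep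

namespace Av321

/-- number of elements of `S` less than `x` -/
def aco (S : Finset ℕ) (x : ℕ) : ℕ := (S.filter (· < x)).card

lemma aco_succ (S : Finset ℕ) (x : ℕ) :
    aco S (x+1) = aco S x + (if x ∈ S then 1 else 0) := by
  unfold aco
  have h : S.filter (· < x + 1) = S.filter (· < x) ∪ S.filter (· = x) := by
    rw [← Finset.filter_or]
    apply Finset.filter_congr
    intro y _
    simp [Nat.lt_succ_iff_lt_or_eq]; omega
  rw [h, Finset.card_union_of_disjoint, Finset.filter_eq']
  · split <;> simp
  · rw [Finset.disjoint_filter]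
    rintro y _ hy rfl
    omega

lemma aco_mono (S : Finset ℕ) {x y : ℕ} (h : x ≤ y) : aco S x ≤ aco S y := by
  apply Finset.card_le_card
  apply Finset.monotone_filter_right
  intro a ha
  omega

lemma aco_le (S : Finset ℕ) (x : ℕ) : aco S x ≤ x := by
  classical
  calc aco S x ≤ (Finset.range x).card := by
        apply Finset.card_le_card_of_injOn id
        · intro a ha
          simp only [aco, Finset.mem_coe, Finset.mem_filter] at ha
          simp [ha.2]
        · exact Function.Injective.injOn (fun a b h => h)
      _ = x := Finset.card_range x

lemma aco_eq_card {n : ℕ} {S : Finset ℕ} (hS : S ⊆ Finset.range n) : aco S n = S.card := by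
  unfold aco
  rw [Finset.filter_true_of_mem]
  intro a ha
  simpa using hS ha

lemma aco_eq_filter_le (S : Finset ℕ) (x : ℕ) :
    aco S (x+1) = (S.filter (· ≤ x)).card := by
  unfold aco; congr 1; apply Finset.filter_congr; intro y _; simp [Nat.lt_succ_iff]

/-- one block of the word: step for `T` (down if in `T`), then step for `S` (up if in `S`) -/
def block (S T : Finset ℕ) (x : ℕ) : List DyckStep :=
  [if x ∈ T then D else U, if x ∈ S then U else D]

def word (n : ℕ) (S T : Finset ℕ) : List DyckStep := (List.range n).flatMap (block S T)

lemma word_succ (n : ℕ) (S T : Finset ℕ) :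
    word (n+1) S T = word n S T ++ block S T n := by
  unfold word
  rw [List.range_succ, List.flatMap_append]
  simp

lemma length_word (n : ℕ) (S T : Finset ℕ) : (word n S T).length = 2 * n := by
  induction n with
  | zero => rfl
  | succ n ih => rw [word_succ, List.length_append, ih]; simp [block]; ring

lemma count_U_word (n : ℕ) (S T : Finset ℕ) :
    (word n S T).count U + aco T n = aco S n + n := by
  induction n with
  | zero => simp [word, aco]
  | succ n ih =>
      rw [word_succ, List.count_append, aco_succ, aco_succ]
      simp only [block, List.count_cons, List.count_nil]
      by_cases h1 : n ∈ T <;> by_cases h2 : n ∈ S <;> simp [h1, h2] <;> omega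

lemma count_D_word (n : ℕ) (S T : Finset ℕ) :
    (word n S T).count D + aco S n = aco T n + n := by
  induction n with
  | zero => simp [word, aco]
  | succ n ih =>
      rw [word_succ, List.count_append, aco_succ, aco_succ]
      simp only [block, List.count_cons, List.count_nil]
      by_cases h1 : n ∈ T <;> by_cases h2 : n ∈ S <;> simp [h1, h2] <;> omega

lemma take_even_word {x n : ℕ} (h : x ≤ n) (S T : Finset ℕ) :
    (word n S T).take (2*x) = word x S T := by
  induction n with
  | zero => interval_cases x; simp [word]
  | succ n ih =>
      rcases Nat.lt_or_ge x (n+1) with h' | h'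
      · rw [word_succ, List.take_append_of_le_length (by rw [length_word]; omega)]
        exact ih (by omega)
      · have : x = n + 1 := by omega
        subst this
        rw [← length_word (n+1) S T, List.take_length]

lemma take_odd_word {x n : ℕ} (h : x < n) (S T : Finset ℕ) :
    (word n S T).take (2*x+1) = word x S T ++ [if x ∈ T then D else U] := by
  have h1 : (word n S T).take (2*x+1) = ((word n S T).take (2*(x+1))).take (2*x+1) := by
    rw [List.take_take]; congr 1; omega
  rw [h1, take_even_word h S T, word_succ, List.take_append,
    length_word]
  have : 2*x+1-2*x = 1 := by omega
  rw [List.take_of_length_le (by rw [length_word]; omega), this]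
  rfl

end Av321

namespace Av321

/-- dominance condition -/
def Dom (n : ℕ) (S T : Finset ℕ) : Prop :=
  S.card = T.card ∧ ∀ x, (T.filter (· ≤ x)).card ≤ (S.filter (· < x)).card

lemma isDyck_iff_dom {n : ℕ} {S T : Finset ℕ} (hS : S ⊆ Finset.range n)
    (hT : T ⊆ Finset.range n) :
    ((word n S T).count U = (word n S T).count D ∧
      ∀ i, ((word n S T).take i).count D ≤ ((word n S T).take i).count U) ↔ Dom n S T := by
  have hU := count_U_word n S T
  have hD := count_D_word n S T
  have haS := aco_le S
  have haT := aco_le T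
  constructor
  · rintro ⟨htot, hpre⟩
    have hcard : S.card = T.card := by
      rw [← aco_eq_card hS, ← aco_eq_card hT]; omega
    refine ⟨hcard, fun x => ?_⟩
    rcases Nat.lt_or_ge x n with hx | hx
    · have h1 := hpre (2*x+1)
      rw [take_odd_word hx S T, List.count_append, List.count_append] at h1
      have hUx := count_U_word x S T
      have hDx := count_D_word x S T
      have e1 : (T.filter (· ≤ x)).card = aco T x + (if x ∈ T then 1 else 0) := by
        rw [← aco_eq_filter_le, aco_succ]
      have e2 : (S.filter (· < x)).card = aco S x := rfl
      rw [e1, e2]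
      by_cases hxt : x ∈ T <;>
        simp only [hxt, if_true, if_false, List.count_cons, List.count_nil] at h1 ⊢ <;>
        simp at h1 <;> omega
    · have h1 : T.filter (· ≤ x) = T := by
        apply Finset.filter_true_of_mem; intro a ha
        have := hT ha; simp at this; omega
      have h2 : S.filter (· < x) = S := by
        apply Finset.filter_true_of_mem; intro a ha
        have := hS ha; simp at this; omega
      rw [h1, h2, hcard]
  · rintro ⟨hcard, hdom⟩
    have haSn : aco S n = S.card := aco_eq_card hS
    have haTn : aco T n = T.card := aco_eq_card hT
    have hdom' : ∀ x, aco T (x+1) ≤ aco S x := by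
      intro x; rw [aco_eq_filter_le]; exact hdom x
    have hba : ∀ x, aco T x ≤ aco S x := by
      intro x
      cases x with
      | zero => simp [aco]
      | succ y => exact le_trans (hdom' y) (aco_mono S (by omega))
    constructor
    · omega
    · intro i
      rcases Nat.lt_or_ge i (2*n) with hi | hi
      · rcases Nat.even_or_odd i with ⟨x, hx⟩ | ⟨x, hx⟩
        · have hxn : x ≤ n := by omega
          have : i = 2*x := by omega
          rw [this, take_even_word hxn]
          have hUx := count_U_word x S T
          have hDx := count_D_word x S T
          have := hba x
          omega
        · have hxn : x < n := by omega
          have : i = 2*x+1 := by omega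
          rw [this, take_odd_word hxn, List.count_append, List.count_append]
          have hUx := count_U_word x S T
          have hDx := count_D_word x S T
          have h3 := hdom' x
          rw [aco_succ] at h3
          by_cases hxt : x ∈ T <;> simp [hxt] at h3 ⊢ <;> omega
      · rw [List.take_of_length_le (by rw [length_word]; omega)]
        omega

lemma getElem?_word_even {n : ℕ} (S T : Finset ℕ) {x : ℕ} (h : x < n) :
    (word n S T)[2*x]? = some (if x ∈ T then D else U) := by
  induction n with
  | zero => omega
  | succ n ih =>
      rw [word_succ]
      rcases Nat.lt_or_ge x n with h' | h'
      · rw [List.getElem?_append_left (by rw [length_word]; omega)]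
        exact ih h'
      · have hx : x = n := by omega
        subst hx
        rw [List.getElem?_append_right (by simp [length_word]), length_word]
        have h2 : 2*x - 2*x = 0 := by omega
        rw [h2]
        rfl

lemma getElem?_word_odd {n : ℕ} (S T : Finset ℕ) {x : ℕ} (h : x < n) :
    (word n S T)[2*x+1]? = some (if x ∈ S then U else D) := by
  induction n with
  | zero => omega
  | succ n ih =>
      rw [word_succ]
      rcases Nat.lt_or_ge x n with h' | h'
      · rw [List.getElem?_append_left (by rw [length_word]; omega)]
        exact ih h'
      · have hx : x = n := by omega
        subst hx
        rw [List.getElem?_append_right (by rw [length_word]; omega), length_word]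
        have h2 : 2*x + 1 - 2*x = 1 := by omega
        rw [h2]
        rfl

/-- recover S from a word -/
def Sof (n : ℕ) (l : List DyckStep) : Finset ℕ :=
  (Finset.range n).filter (fun x => l[2*x+1]? = some U)

def Tof (n : ℕ) (l : List DyckStep) : Finset ℕ :=
  (Finset.range n).filter (fun x => l[2*x]? = some D)

lemma Sof_word {n : ℕ} {S T : Finset ℕ} (hS : S ⊆ Finset.range n) :
    Sof n (word n S T) = S := by
  ext x
  simp only [Sof, Finset.mem_filter, Finset.mem_range]
  constructor
  · rintro ⟨hx, hl⟩
    rw [getElem?_word_odd S T hx] at hl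
    by_cases h : x ∈ S
    · exact h
    · simp [h] at hl
  · intro hx
    have hxn : x < n := by simpa using hS hx
    rw [getElem?_word_odd S T hxn]
    simp [hx, hxn]

lemma Tof_word {n : ℕ} {S T : Finset ℕ} (hT : T ⊆ Finset.range n) :
    Tof n (word n S T) = T := by
  ext x
  simp only [Tof, Finset.mem_filter, Finset.mem_range]
  constructor
  · rintro ⟨hx, hl⟩
    rw [getElem?_word_even S T hx] at hl
    by_cases h : x ∈ T
    · exact h
    · simp [h] at hl
  · intro hx
    have hxn : x < n := by simpa using hT hx
    rw [getElem?_word_even S T hxn]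
    simp [hx, hxn]

lemma word_Sof_Tof {n : ℕ} {l : List DyckStep} (hl : l.length = 2*n) :
    word n (Sof n l) (Tof n l) = l := by
  apply List.ext_getElem?
  intro i
  rcases Nat.lt_or_ge i (2*n) with hi | hi
  · rcases Nat.even_or_odd i with ⟨x, hx⟩ | ⟨x, hx⟩
    · have hxn : x < n := by omega
      have hieq : i = 2*x := by omega
      subst hieq
      rw [getElem?_word_even _ _ hxn]
      have hlt : 2*x < l.length := by omega
      rw [List.getElem?_eq_getElem hlt]
      rcases (l[2*x]'hlt).dichotomy with h | h
      · have : x ∉ Tof n l := by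
          simp only [Tof, Finset.mem_filter, Finset.mem_range]
          rw [List.getElem?_eq_getElem hlt, h]
          simp
        simp [this, h]
      · have : x ∈ Tof n l := by
          simp only [Tof, Finset.mem_filter, Finset.mem_range]
          rw [List.getElem?_eq_getElem hlt, h]
          simp [hxn]
        simp [this, h]
    · have hxn : x < n := by omega
      have hieq : i = 2*x+1 := by omega
      subst hieq
      rw [getElem?_word_odd _ _ hxn]
      have hlt : 2*x+1 < l.length := by omega
      rw [List.getElem?_eq_getElem hlt]
      rcases (l[2*x+1]'hlt).dichotomy with h | h
      · have : x ∈ Sof n l := by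
          simp only [Sof, Finset.mem_filter, Finset.mem_range]
          rw [List.getElem?_eq_getElem hlt, h]
          simp [hxn]
        simp [this, h]
      · have : x ∉ Sof n l := by
          simp only [Sof, Finset.mem_filter, Finset.mem_range]
          rw [List.getElem?_eq_getElem hlt, h]
          simp
        simp [this, h]
  · have h1 : (word n (Sof n l) (Tof n l))[i]? = none :=
      List.getElem?_eq_none (by rw [length_word]; omega)
    have h2 : l[i]? = none := List.getElem?_eq_none (by omega)
    rw [h1, h2]

end Av321

namespace Av321

variable {n : ℕ}

def pv (π : Equiv.Perm (Fin n)) (x : ℕ) : ℕ := if h : x < n then (π ⟨x, h⟩ : ℕ) else x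

lemma pv_val (π : Equiv.Perm (Fin n)) (i : Fin n) : pv π (i : ℕ) = π i := by
  simp [pv, i.isLt]

lemma pv_lt (π : Equiv.Perm (Fin n)) {x : ℕ} (h : x < n) : pv π x < n := by
  simp only [pv, dif_pos h]
  exact (π ⟨x, h⟩).isLt

lemma pv_pv_symm (π : Equiv.Perm (Fin n)) {x : ℕ} (h : x < n) : pv π.symm (pv π x) = x := by
  simp only [pv, dif_pos h]
  rw [dif_pos (π ⟨x, h⟩).isLt]
  simp

lemma pv_symm_pv (π : Equiv.Perm (Fin n)) {x : ℕ} (h : x < n) : pv π (pv π.symm x) = x := by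
  simpa using pv_pv_symm π.symm h

def Sp (π : Equiv.Perm (Fin n)) : Finset ℕ := (Finset.range n).filter (fun x => x < pv π x)

def Tp (π : Equiv.Perm (Fin n)) : Finset ℕ :=
  (Finset.range n).filter (fun x => pv π.symm x < x)

lemma mem_Sp {π : Equiv.Perm (Fin n)} {x : ℕ} : x ∈ Sp π ↔ x < n ∧ x < pv π x := by
  simp [Sp]

lemma mem_Tp {π : Equiv.Perm (Fin n)} {x : ℕ} : x ∈ Tp π ↔ x < n ∧ pv π.symm x < x := by
  simp [Tp]

lemma Sp_subset (π : Equiv.Perm (Fin n)) : Sp π ⊆ Finset.range n := Finset.filter_subset _ _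
lemma Tp_subset (π : Equiv.Perm (Fin n)) : Tp π ⊆ Finset.range n := Finset.filter_subset _ _

/-- weak-excedance monotonicity from 321-avoidance -/
lemma mono_weak {π : Equiv.Perm (Fin n)} (hA : Avoids321 π) {i j : Fin n}
    (hij : i < j) (hi : (i : ℕ) ≤ (π i : ℕ)) (hj : (j : ℕ) ≤ (π j : ℕ)) : π i < π j := by
  rcases lt_or_ge (π i) (π j) with h | h
  · exact h
  exfalso
  have hne : π j ≠ π i := fun e => absurd (π.injective e) (ne_of_gt hij)
  have hlt : π j < π i := lt_of_le_of_ne h hne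
  classical
  set K := Finset.univ.filter (fun k => π k < π j) with hK
  have hKcard : K.card = (π j : ℕ) := by
    have himg : K = (Finset.Iio (π j)).image π.symm := by
      ext k
      simp only [hK, Finset.mem_filter, Finset.mem_univ, true_and, Finset.mem_image,
        Finset.mem_Iio]
      constructor
      · intro hk; exact ⟨π k, hk, by simp⟩
      · rintro ⟨v, hv, rfl⟩; simpa using hv
    rw [himg, Finset.card_image_of_injective _ π.symm.injective, Fin.card_Iio]
  have hsub : K ⊆ ((Finset.Iic j).erase i).erase j := by
    intro k hk
    simp only [hK, Finset.mem_filter, Finset.mem_univ, true_and] at hk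
    have hkj : k ≠ j := fun e => by rw [e] at hk; exact lt_irrefl _ hk
    have hki : k ≠ i := fun e => by rw [e] at hk; exact absurd hk (not_lt.2 (le_of_lt hlt))
    have hkle : k ≤ j := by
      by_contra hgt
      push_neg at hgt
      exact hA i j k hij hgt ⟨hlt, hk⟩
    simp only [Finset.mem_erase, Finset.mem_Iic]
    exact ⟨hkj, hki, hkle⟩
  have hiIic : i ∈ Finset.Iic j := Finset.mem_Iic.2 (le_of_lt hij)
  have hjmem : j ∈ (Finset.Iic j).erase i :=
    Finset.mem_erase.2 ⟨(ne_of_gt hij), Finset.mem_Iic.2 le_rfl⟩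
  have hle := Finset.card_le_card hsub
  rw [hKcard, Finset.card_erase_of_mem hjmem, Finset.card_erase_of_mem hiIic, Fin.card_Iic] at hle
  have h1 : (i : ℕ) < (j : ℕ) := hij
  have h2 : (j : ℕ) < (π j : ℕ) ∨ (j : ℕ) = (π j : ℕ) := lt_or_eq_of_le hj
  omega

lemma avoids_symm {π : Equiv.Perm (Fin n)} (hA : Avoids321 π) : Avoids321 π.symm := by
  rintro i j k hij hjk ⟨h1, h2⟩
  exact hA _ _ _ h2 h1 (by simp only [Equiv.apply_symm_apply]; exact ⟨hjk, hij⟩)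

lemma mono_nonexc {π : Equiv.Perm (Fin n)} (hA : Avoids321 π) {i j : Fin n}
    (hij : i < j) (hi : (π i : ℕ) ≤ (i : ℕ)) (hj : (π j : ℕ) ≤ (j : ℕ)) : π i < π j := by
  rcases lt_or_ge (π i) (π j) with h | h
  · exact h
  exfalso
  have hne : π j ≠ π i := fun e => absurd (π.injective e) (ne_of_gt hij)
  have hlt : π j < π i := lt_of_le_of_ne h hne
  have := mono_weak (avoids_symm hA) (i := π j) (j := π i) hlt
    (by simpa using hj) (by simpa using hi)
  simp only [Equiv.symm_apply_apply] at this
  exact absurd this (not_lt.2 (le_of_lt hij))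

lemma avoids_of_mono {π : Equiv.Perm (Fin n)}
    (h1 : ∀ i j : Fin n, i < j → (i : ℕ) < (π i : ℕ) → (j : ℕ) < (π j : ℕ) → π i < π j)
    (h2 : ∀ i j : Fin n, i < j → (π i : ℕ) ≤ (i : ℕ) → (π j : ℕ) ≤ (j : ℕ) → π i < π j) :
    Avoids321 π := by
  rintro i j k hij hjk ⟨hji, hkj⟩
  by_cases ej : (j : ℕ) < (π j : ℕ)
  · by_cases ei : (i : ℕ) < (π i : ℕ)
    · exact absurd hji (not_lt.2 (le_of_lt (h1 i j hij ei ej)))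
    · by_cases ek : (k : ℕ) < (π k : ℕ)
      · exact absurd hkj (not_lt.2 (le_of_lt (h1 j k hjk ej ek)))
      · have := h2 i k (lt_trans hij hjk) (not_lt.1 ei) (not_lt.1 ek)
        exact absurd this (not_lt.2 (le_of_lt (lt_trans hkj hji)))
  · by_cases ek : (k : ℕ) < (π k : ℕ)
    · have e1 : (π k : ℕ) < (π j : ℕ) := hkj
      have e2 : (j : ℕ) < (k : ℕ) := hjk
      push_neg at ej
      omega
    · exact absurd hkj (not_lt.2 (le_of_lt (h2 j k hjk (not_lt.1 ej) (not_lt.1 ek))))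

lemma card_Sp_eq_Tp (π : Equiv.Perm (Fin n)) : (Sp π).card = (Tp π).card := by
  apply Finset.card_bij' (fun x _ => pv π x) (fun y _ => pv π.symm y)
  · intro x hx
    rw [mem_Sp] at hx
    rw [mem_Tp]
    refine ⟨pv_lt π hx.1, ?_⟩
    rw [pv_pv_symm π hx.1]
    exact hx.2
  · intro y hy
    rw [mem_Tp] at hy
    rw [mem_Sp]
    refine ⟨pv_lt π.symm hy.1, ?_⟩
    rw [pv_symm_pv π hy.1]
    exact hy.2
  · intro x hx
    exact pv_pv_symm π (mem_Sp.1 hx).1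
  · intro y hy
    exact pv_symm_pv π (mem_Tp.1 hy).1

lemma dom_perm (π : Equiv.Perm (Fin n)) (x : ℕ) :
    ((Tp π).filter (· ≤ x)).card ≤ ((Sp π).filter (· < x)).card := by
  apply Finset.card_le_card_of_injOn (fun t => pv π.symm t)
  · intro t ht
    simp only [Finset.mem_coe, Finset.mem_filter, mem_Tp] at ht
    obtain ⟨⟨htn, hts⟩, htx⟩ := ht
    simp only [Finset.mem_coe, Finset.mem_filter, mem_Sp]
    refine ⟨⟨pv_lt π.symm htn, ?_⟩, by omega⟩
    rw [pv_symm_pv π htn]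
    exact hts
  · intro a ha b hb hab
    have ha' : a ∈ (Tp π).filter (· ≤ x) := ha
    have hb' : b ∈ (Tp π).filter (· ≤ x) := hb
    simp only [Finset.mem_filter, mem_Tp] at ha' hb'
    have := congrArg (pv π) hab
    rwa [pv_symm_pv π ha'.1.1, pv_symm_pv π hb'.1.1] at this

end Av321

namespace Av321

variable {n : ℕ}

lemma rank_inj {t : Finset ℕ} {x y : ℕ} (hx : x ∈ t) (hy : y ∈ t)
    (h : (t.filter (· ≤ x)).card = (t.filter (· ≤ y)).card) : x = y := by
  have key : ∀ a b : ℕ, a ∈ t → b ∈ t → a < b →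
      (t.filter (· ≤ a)).card < (t.filter (· ≤ b)).card := by
    intro a b ha hb hab
    apply Finset.card_lt_card
    constructor
    · apply Finset.monotone_filter_right
      intro c hc
      omega
    · intro hsub
      have : b ∈ t.filter (· ≤ a) := hsub (Finset.mem_filter.2 ⟨hb, le_refl b⟩)
      simp only [Finset.mem_filter] at this
      omega
  rcases lt_trichotomy x y with hl | he | hl
  · exact absurd h (ne_of_lt (key x y hx hy hl))
  · exact he
  · exact absurd h.symm (ne_of_lt (key y x hy hx hl))

lemma rank_image {s t : Finset ℕ} {f : ℕ → ℕ}
    (hmono : ∀ a ∈ s, ∀ b ∈ s, a < b → f a < f b) (himg : s.image f = t)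
    {a : ℕ} (ha : a ∈ s) :
    (t.filter (· ≤ f a)).card = (s.filter (· ≤ a)).card := by
  have hset : t.filter (· ≤ f a) = (s.filter (· ≤ a)).image f := by
    ext c
    simp only [Finset.mem_filter, Finset.mem_image, ← himg]
    constructor
    · rintro ⟨⟨b, hb, rfl⟩, hle⟩
      refine ⟨b, ⟨hb, ?_⟩, rfl⟩
      by_contra hgt
      push_neg at hgt
      exact absurd hle (not_le.2 (hmono a ha b hb hgt))
    · rintro ⟨b, ⟨hb, hba⟩, rfl⟩
      refine ⟨⟨b, hb, rfl⟩, ?_⟩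
      rcases lt_or_eq_of_le hba with hlt | heq
      · exact le_of_lt (hmono b hb a ha hlt)
      · rw [heq]
  rw [hset, Finset.card_image_of_injOn]
  intro u hu v hv huv
  have hu' : u ∈ s := (Finset.mem_filter.1 hu).1
  have hv' : v ∈ s := (Finset.mem_filter.1 hv).1
  rcases lt_trichotomy u v with hl | he | hl
  · exact absurd huv (ne_of_lt (hmono u hu' v hv' hl))
  · exact he
  · exact absurd huv.symm (ne_of_lt (hmono v hv' u hu' hl))

/-- image of the excedance set under the permutation -/
lemma image_Sp {π : Equiv.Perm (Fin n)} : (Sp π).image (pv π) = Tp π := by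
  ext y
  simp only [Finset.mem_image, mem_Sp, mem_Tp]
  constructor
  · rintro ⟨x, ⟨hxn, hx⟩, rfl⟩
    exact ⟨pv_lt π hxn, by rw [pv_pv_symm π hxn]; exact hx⟩
  · rintro ⟨hyn, hy⟩
    exact ⟨pv π.symm y, ⟨pv_lt π.symm hyn, by rw [pv_symm_pv π hyn]; exact hy⟩,
      pv_symm_pv π hyn⟩

def Spc (π : Equiv.Perm (Fin n)) : Finset ℕ :=
  (Finset.range n).filter (fun x => pv π x ≤ x)

def Tpc (π : Equiv.Perm (Fin n)) : Finset ℕ :=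
  (Finset.range n).filter (fun x => x ≤ pv π.symm x)

lemma mem_Spc {π : Equiv.Perm (Fin n)} {x : ℕ} : x ∈ Spc π ↔ x < n ∧ pv π x ≤ x := by
  simp [Spc]

lemma mem_Tpc {π : Equiv.Perm (Fin n)} {x : ℕ} : x ∈ Tpc π ↔ x < n ∧ x ≤ pv π.symm x := by
  simp [Tpc]

lemma Spc_eq {π : Equiv.Perm (Fin n)} : Spc π = Finset.range n \ Sp π := by
  ext x
  simp only [mem_Spc, Finset.mem_sdiff, Finset.mem_range, mem_Sp]
  omega

lemma Tpc_eq {π : Equiv.Perm (Fin n)} : Tpc π = Finset.range n \ Tp π := by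
  ext x
  simp only [mem_Tpc, Finset.mem_sdiff, Finset.mem_range, mem_Tp]
  omega

lemma image_Spc {π : Equiv.Perm (Fin n)} : (Spc π).image (pv π) = Tpc π := by
  ext y
  simp only [Finset.mem_image, mem_Spc, mem_Tpc]
  constructor
  · rintro ⟨x, ⟨hxn, hx⟩, rfl⟩
    exact ⟨pv_lt π hxn, by rw [pv_pv_symm π hxn]; exact hx⟩
  · rintro ⟨hyn, hy⟩
    exact ⟨pv π.symm y, ⟨pv_lt π.symm hyn, by rw [pv_symm_pv π hyn]; exact hy⟩,
      pv_symm_pv π hyn⟩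

lemma perm_eq_of_SpTp {π ρ : Equiv.Perm (Fin n)} (hAπ : Avoids321 π) (hAρ : Avoids321 ρ)
    (hS : Sp π = Sp ρ) (hT : Tp π = Tp ρ) : π = ρ := by
  have hmonoS : ∀ σ : Equiv.Perm (Fin n), Avoids321 σ →
      ∀ a ∈ Sp σ, ∀ b ∈ Sp σ, a < b → pv σ a < pv σ b := by
    intro σ hA a ha b hb hab
    rw [mem_Sp] at ha hb
    have h1 : (⟨a, ha.1⟩ : Fin n) < ⟨b, hb.1⟩ := hab
    have := mono_weak hA h1 ?_ ?_
    · have h2 : (σ ⟨a, ha.1⟩ : ℕ) < (σ ⟨b, hb.1⟩ : ℕ) := this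
      simpa [pv, ha.1, hb.1] using h2
    · have := ha.2; simp only [pv, dif_pos ha.1] at this; exact le_of_lt this
    · have := hb.2; simp only [pv, dif_pos hb.1] at this; exact le_of_lt this
  have hmonoSc : ∀ σ : Equiv.Perm (Fin n), Avoids321 σ →
      ∀ a ∈ Spc σ, ∀ b ∈ Spc σ, a < b → pv σ a < pv σ b := by
    intro σ hA a ha b hb hab
    rw [mem_Spc] at ha hb
    have h1 : (⟨a, ha.1⟩ : Fin n) < ⟨b, hb.1⟩ := hab
    have := mono_nonexc hA h1 ?_ ?_
    · have h2 : (σ ⟨a, ha.1⟩ : ℕ) < (σ ⟨b, hb.1⟩ : ℕ) := this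
      simpa [pv, ha.1, hb.1] using h2
    · have := ha.2; simp only [pv, dif_pos ha.1] at this; exact this
    · have := hb.2; simp only [pv, dif_pos hb.1] at this; exact this
  have hSc : Spc π = Spc ρ := by rw [Spc_eq, Spc_eq, hS]
  have hTc : Tpc π = Tpc ρ := by rw [Tpc_eq, Tpc_eq, hT]
  have key : ∀ i : Fin n, pv π (i : ℕ) = pv ρ (i : ℕ) := by
    intro i
    by_cases hmem : (i : ℕ) ∈ Sp π
    · have hmem' : (i : ℕ) ∈ Sp ρ := hS ▸ hmem
      have r1 := rank_image (hmonoS π hAπ) (image_Sp (π := π)) hmem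
      have r2 := rank_image (hmonoS ρ hAρ) (image_Sp (π := ρ)) hmem'
      rw [hS] at r1
      apply rank_inj (t := Tp π)
      · rw [← image_Sp]; exact Finset.mem_image_of_mem _ hmem
      · rw [hT, ← image_Sp]; exact Finset.mem_image_of_mem _ hmem'
      · rw [r1, hT, r2]
    · have hc : (i : ℕ) ∈ Spc π := by
        rw [Spc_eq, Finset.mem_sdiff]
        exact ⟨Finset.mem_range.2 i.isLt, hmem⟩
      have hc' : (i : ℕ) ∈ Spc ρ := hSc ▸ hc
      have r1 := rank_image (hmonoSc π hAπ) (image_Spc (π := π)) hc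
      have r2 := rank_image (hmonoSc ρ hAρ) (image_Spc (π := ρ)) hc'
      rw [hSc] at r1
      apply rank_inj (t := Tpc π)
      · rw [← image_Spc]; exact Finset.mem_image_of_mem _ hc
      · rw [hTc, ← image_Spc]; exact Finset.mem_image_of_mem _ hc'
      · rw [r1, hTc, r2]
  apply Equiv.ext
  intro i
  have := key i
  rw [pv_val, pv_val] at this
  exact Fin.val_injective this

end Av321

namespace Av321

variable {n : ℕ}

lemma orderIso_rank_lt {U : Finset ℕ} {k : ℕ} (e : Fin k ≃o ↥U) (m : Fin k) :
    (U.filter (fun c => c < (e m : ℕ))).card = (m : ℕ) := by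
  classical
  have hset : U.filter (fun c => c < (e m : ℕ)) =
      (Finset.Iio m).image (fun j => ((e j : ℕ))) := by
    ext c
    simp only [Finset.mem_filter, Finset.mem_image, Finset.mem_Iio]
    constructor
    · rintro ⟨hc, hlt⟩
      refine ⟨e.symm ⟨c, hc⟩, ?_, by simp⟩
      rw [← e.lt_iff_lt, e.apply_symm_apply]
      exact Subtype.mk_lt_mk.2 hlt
    · rintro ⟨j, hj, rfl⟩
      exact ⟨(e j).2, Subtype.coe_lt_coe.2 (e.lt_iff_lt.2 hj)⟩
  rw [hset, Finset.card_image_of_injOn, Fin.card_Iio]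
  intro a _ b _ hab
  exact e.injective (Subtype.ext hab)

lemma orderIso_rank_le {U : Finset ℕ} {k : ℕ} (e : Fin k ≃o ↥U) (m : Fin k) :
    (U.filter (fun c => c ≤ (e m : ℕ))).card = (m : ℕ) + 1 := by
  classical
  have hset : U.filter (fun c => c ≤ (e m : ℕ)) =
      (Finset.Iic m).image (fun j => ((e j : ℕ))) := by
    ext c
    simp only [Finset.mem_filter, Finset.mem_image, Finset.mem_Iic]
    constructor
    · rintro ⟨hc, hle⟩
      refine ⟨e.symm ⟨c, hc⟩, ?_, by simp⟩
      rw [← e.le_iff_le, e.apply_symm_apply]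
      exact Subtype.mk_le_mk.2 hle
    · rintro ⟨j, hj, rfl⟩
      exact ⟨(e j).2, Subtype.coe_le_coe.2 (e.le_iff_le.2 hj)⟩
  rw [hset, Finset.card_image_of_injOn, Fin.card_Iic]
  intro a _ b _ hab
  exact e.injective (Subtype.ext hab)

lemma filter_compl_card {A : Finset ℕ} (hA : A ⊆ Finset.range n) (p : ℕ → Prop)
    [DecidablePred p] :
    (((Finset.range n) \ A).filter p).card + (A.filter p).card =
      ((Finset.range n).filter p).card := by
  rw [← Finset.card_union_of_disjoint, ← Finset.filter_union,
    Finset.sdiff_union_of_subset hA]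
  exact Finset.disjoint_filter_filter Finset.sdiff_disjoint

lemma exists_avoiding (S T : Finset ℕ) (hS : S ⊆ Finset.range n) (hT : T ⊆ Finset.range n)
    (hcard : S.card = T.card)
    (hdom : ∀ x, (T.filter (· ≤ x)).card ≤ (S.filter (· < x)).card) :
    ∃ π : Equiv.Perm (Fin n), Avoids321 π ∧ Sp π = S ∧ Tp π = T := by
  classical
  have hTk : T.card = S.card := hcard.symm
  set Sc := Finset.range n \ S with hScdef
  set Tc := Finset.range n \ T with hTcdef
  have hScc : Sc.card = n - S.card := by
    rw [hScdef, Finset.card_sdiff_of_subset hS, Finset.card_range]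
  have hTcc : Tc.card = n - S.card := by
    rw [hTcdef, Finset.card_sdiff_of_subset hT, Finset.card_range, hTk]
  set e1 : Fin S.card ≃o ↥S := S.orderIsoOfFin rfl with he1
  set e2 : Fin S.card ≃o ↥T := T.orderIsoOfFin hTk with he2
  set c1 : Fin (n - S.card) ≃o ↥Sc := Sc.orderIsoOfFin hScc with hc1
  set c2 : Fin (n - S.card) ≃o ↥Tc := Tc.orderIsoOfFin hTcc with hc2
  have hTmem : ∀ y : ↥T, (y : ℕ) < n := fun y => Finset.mem_range.1 (hT y.2)
  have hTcmem : ∀ y : ↥Tc, (y : ℕ) < n := fun y =>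
    Finset.mem_range.1 (Finset.mem_sdiff.1 y.2).1
  have K1 : ∀ m : Fin S.card, (e1 m : ℕ) < (e2 m : ℕ) := by
    intro m
    by_contra hle
    push_neg at hle
    have h1 := orderIso_rank_le e2 m
    have h2 := orderIso_rank_lt e1 m
    have h3 := hdom (e2 m : ℕ)
    have h4 : (S.filter (fun c => c < (e2 m : ℕ))).card ≤
        (S.filter (fun c => c < (e1 m : ℕ))).card := by
      apply Finset.card_le_card
      apply Finset.monotone_filter_right
      intro c hc
      omega
    omega
  have K2 : ∀ m : Fin (n - S.card), (c2 m : ℕ) ≤ (c1 m : ℕ) := by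
    intro m
    by_contra hlt
    push_neg at hlt
    have h1 := orderIso_rank_le c1 m
    have h2 : (Tc.filter (fun c => c ≤ (c1 m : ℕ))).card ≤ (m : ℕ) := by
      calc (Tc.filter (fun c => c ≤ (c1 m : ℕ))).card
          ≤ (Tc.filter (fun c => c < (c2 m : ℕ))).card := by
            apply Finset.card_le_card
            apply Finset.monotone_filter_right
            intro c hc
            omega
        _ = (m : ℕ) := orderIso_rank_lt c2 m
    have h3 := filter_compl_card hS (fun c => c ≤ (c1 m : ℕ))
    have h4 := filter_compl_card hT (fun c => c ≤ (c1 m : ℕ))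
    have hy : (c1 m : ℕ) ∉ S := (Finset.mem_sdiff.1 (c1 m).2).2
    have h5 : (S.filter (fun c => c ≤ (c1 m : ℕ))).card =
        (S.filter (fun c => c < (c1 m : ℕ))).card := by
      have ha := aco_succ S (c1 m : ℕ)
      rw [aco_eq_filter_le] at ha
      simp only [hy, if_false, add_zero] at ha
      exact ha
    have h6 := hdom (c1 m : ℕ)
    rw [← hScdef] at h3
    rw [← hTcdef] at h4
    omega
  set g : Fin n → Fin n := fun x =>
    if h : (x : ℕ) ∈ S then ⟨(e2 (e1.symm ⟨(x : ℕ), h⟩) : ℕ), hTmem _⟩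
    else ⟨(c2 (c1.symm ⟨(x : ℕ), Finset.mem_sdiff.2 ⟨Finset.mem_range.2 x.isLt, h⟩⟩) : ℕ),
      hTcmem _⟩ with hg
  have hgS : ∀ (x : Fin n) (h : (x : ℕ) ∈ S),
      g x = ⟨(e2 (e1.symm ⟨(x : ℕ), h⟩) : ℕ), hTmem _⟩ := by
    intro x h; simp only [hg, dif_pos h]
  have hgSc : ∀ (x : Fin n) (h : (x : ℕ) ∉ S),
      g x = ⟨(c2 (c1.symm ⟨(x : ℕ), Finset.mem_sdiff.2 ⟨Finset.mem_range.2 x.isLt, h⟩⟩) : ℕ),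
        hTcmem _⟩ := by
    intro x h; simp only [hg, dif_neg h]
  -- key pointwise facts
  have hup : ∀ (x : Fin n), (x : ℕ) ∈ S → (x : ℕ) < (g x : ℕ) ∧ ((g x : Fin n) : ℕ) ∈ T := by
    intro x h
    rw [hgS x h]
    constructor
    · have := K1 (e1.symm ⟨(x : ℕ), h⟩)
      rwa [e1.apply_symm_apply] at this
    · exact (e2 (e1.symm ⟨(x : ℕ), h⟩)).2
  have hdown : ∀ (x : Fin n), (x : ℕ) ∉ S →
      (g x : ℕ) ≤ (x : ℕ) ∧ ((g x : Fin n) : ℕ) ∈ Tc := by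
    intro x h
    rw [hgSc x h]
    constructor
    · have := K2 (c1.symm ⟨(x : ℕ), Finset.mem_sdiff.2 ⟨Finset.mem_range.2 x.isLt, h⟩⟩)
      rwa [c1.apply_symm_apply] at this
    · exact (c2 (c1.symm _)).2
  have hginj : Function.Injective g := by
    intro x y hxy
    by_cases hx : (x : ℕ) ∈ S <;> by_cases hy : (y : ℕ) ∈ S
    · rw [hgS x hx, hgS y hy] at hxy
      have h1 : (e2 (e1.symm ⟨(x : ℕ), hx⟩) : ℕ) = (e2 (e1.symm ⟨(y : ℕ), hy⟩) : ℕ) :=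
        congrArg Fin.val hxy
      have h2 := e1.symm.injective (e2.injective (Subtype.ext h1))
      have h3 : (x : ℕ) = (y : ℕ) := congrArg Subtype.val h2
      exact Fin.val_injective h3
    · exfalso
      have m1 := (hup x hx).2
      have m2 := (hdown y hy).2
      rw [hxy] at m1
      exact (Finset.mem_sdiff.1 m2).2 m1
    · exfalso
      have m1 := (hup y hy).2
      have m2 := (hdown x hx).2
      rw [hxy] at m2
      exact (Finset.mem_sdiff.1 m2).2 m1
    · rw [hgSc x hx, hgSc y hy] at hxy
      have h1 : (c2 (c1.symm ⟨(x : ℕ), _⟩) : ℕ) = (c2 (c1.symm ⟨(y : ℕ), _⟩) : ℕ) :=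
        congrArg Fin.val hxy
      have h2 := c1.symm.injective (c2.injective (Subtype.ext h1))
      have h3 : (x : ℕ) = (y : ℕ) := congrArg Subtype.val h2
      exact Fin.val_injective h3
  have hgbij : Function.Bijective g := Finite.injective_iff_bijective.1 hginj
  refine ⟨Equiv.ofBijective g hgbij, ?_, ?_, ?_⟩
  case' refine_2 =>
    ext x
    rw [mem_Sp]
    constructor
    · rintro ⟨hxn, hxlt⟩
      by_contra hxS
      have h1 : ((g ⟨x, hxn⟩ : Fin n) : ℕ) ≤ ((⟨x, hxn⟩ : Fin n) : ℕ) := (hdown ⟨x, hxn⟩ hxS).1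
      rw [pv, dif_pos hxn] at hxlt
      have h2 : x < ((g ⟨x, hxn⟩ : Fin n) : ℕ) := hxlt
      have h3 : ((⟨x, hxn⟩ : Fin n) : ℕ) = x := rfl
      omega
    · intro hxS
      have hxn : x < n := Finset.mem_range.1 (hS hxS)
      refine ⟨hxn, ?_⟩
      rw [pv, dif_pos hxn]
      exact (hup ⟨x, hxn⟩ hxS).1
  case' refine_3 =>
    ext y
    rw [mem_Tp]
    constructor
    · rintro ⟨hyn, hylt⟩
      rw [pv, dif_pos hyn] at hylt
      set w := (Equiv.ofBijective g hgbij).symm ⟨y, hyn⟩ with hw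
      have hgw : g w = ⟨y, hyn⟩ := (Equiv.ofBijective g hgbij).apply_symm_apply ⟨y, hyn⟩
      have hwy : (w : ℕ) < y := hylt
      by_cases hwS : (w : ℕ) ∈ S
      · have := (hup w hwS).2
        rwa [hgw] at this
      · exfalso
        have h1 := (hdown w hwS).1
        rw [hgw] at h1
        have h3 : ((⟨y, hyn⟩ : Fin n) : ℕ) = y := rfl
        omega
    · intro hyT
      have hyn : y < n := Finset.mem_range.1 (hT hyT)
      refine ⟨hyn, ?_⟩
      rw [pv, dif_pos hyn]
      set m := e2.symm ⟨y, hyT⟩ with hm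
      have hx : ((e1 m : ℕ)) ∈ S := (e1 m).2
      have hgx : g ⟨(e1 m : ℕ), Finset.mem_range.1 (hS hx)⟩ = ⟨y, hyn⟩ := by
        rw [hgS _ hx]
        have h4 : e1.symm ⟨((e1 m : ℕ)), hx⟩ = m := by
          apply e1.injective
          rw [e1.apply_symm_apply]
        rw [h4]
        apply Fin.val_injective
        simp [hm]
      have hsymm : (Equiv.ofBijective g hgbij).symm ⟨y, hyn⟩ =
          ⟨(e1 m : ℕ), Finset.mem_range.1 (hS hx)⟩ := by
        apply (Equiv.ofBijective g hgbij).injective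
        rw [(Equiv.ofBijective g hgbij).apply_symm_apply]
        exact hgx.symm
      rw [hsymm]
      have h5 := K1 m
      have hym : (e2 m : ℕ) = y := by simp [hm]
      have h6 : ((⟨(e1 m : ℕ), Finset.mem_range.1 (hS hx)⟩ : Fin n) : ℕ) = (e1 m : ℕ) := rfl
      omega
  case refine_1 =>
    apply avoids_of_mono
    · intro i j hij hi hj
      have hiS : (i : ℕ) ∈ S := by
        by_contra hiS
        have h1 : ((g i : Fin n) : ℕ) ≤ (i : ℕ) := (hdown i hiS).1
        have h2 : (i : ℕ) < ((g i : Fin n) : ℕ) := hi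
        omega
      have hjS : (j : ℕ) ∈ S := by
        by_contra hjS
        have h1 : ((g j : Fin n) : ℕ) ≤ (j : ℕ) := (hdown j hjS).1
        have h2 : (j : ℕ) < ((g j : Fin n) : ℕ) := hj
        omega
      have hlt : e1.symm ⟨(i : ℕ), hiS⟩ < e1.symm ⟨(j : ℕ), hjS⟩ := by
        rw [← e1.lt_iff_lt, e1.apply_symm_apply, e1.apply_symm_apply]
        exact Subtype.mk_lt_mk.2 hij
      show g i < g j
      rw [hgS i hiS, hgS j hjS]
      exact Fin.mk_lt_mk.2 (Subtype.coe_lt_coe.2 (e2.lt_iff_lt.2 hlt))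
    · intro i j hij hi hj
      have hiS : (i : ℕ) ∉ S := by
        intro hiS
        have h1 : (i : ℕ) < ((g i : Fin n) : ℕ) := (hup i hiS).1
        have h2 : ((g i : Fin n) : ℕ) ≤ (i : ℕ) := hi
        omega
      have hjS : (j : ℕ) ∉ S := by
        intro hjS
        have h1 : (j : ℕ) < ((g j : Fin n) : ℕ) := (hup j hjS).1
        have h2 : ((g j : Fin n) : ℕ) ≤ (j : ℕ) := hj
        omega
      have hlt : c1.symm ⟨(i : ℕ), Finset.mem_sdiff.2 ⟨Finset.mem_range.2 i.isLt, hiS⟩⟩ <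
          c1.symm ⟨(j : ℕ), Finset.mem_sdiff.2 ⟨Finset.mem_range.2 j.isLt, hjS⟩⟩ := by
        rw [← c1.lt_iff_lt, c1.apply_symm_apply, c1.apply_symm_apply]
        exact Subtype.mk_lt_mk.2 hij
      show g i < g j
      rw [hgSc i hiS, hgSc j hjS]
      exact Fin.mk_lt_mk.2 (Subtype.coe_lt_coe.2 (c2.lt_iff_lt.2 hlt))

end Av321

namespace Av321

def M (n : ℕ) := {ST : Finset ℕ × Finset ℕ //
  ST.1 ⊆ Finset.range n ∧ ST.2 ⊆ Finset.range n ∧ ST.1.card = ST.2.card ∧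
  ∀ x, (ST.2.filter (· ≤ x)).card ≤ (ST.1.filter (· < x)).card}

def Fmap {n : ℕ} (p : {π : Equiv.Perm (Fin n) // Avoids321 π}) : M n :=
  ⟨(Sp p.1, Tp p.1), Sp_subset _, Tp_subset _, card_Sp_eq_Tp _, dom_perm _⟩

lemma card_avoiders (n : ℕ) :
    Nat.card {π : Equiv.Perm (Fin n) // Avoids321 π} = Nat.card (M n) := by
  apply Nat.card_eq_of_bijective Fmap
  constructor
  · rintro ⟨π, hπ⟩ ⟨ρ, hρ⟩ h
    have h1 := congrArg Subtype.val h
    simp only [Fmap, Prod.mk.injEq] at h1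
    exact Subtype.ext (perm_eq_of_SpTp hπ hρ h1.1 h1.2)

  · rintro ⟨⟨S, T⟩, hS, hT, hcard, hdom⟩
    obtain ⟨π, hA, h1, h2⟩ := exists_avoiding S T hS hT hcard hdom
    refine ⟨⟨π, hA⟩, ?_⟩
    apply Subtype.ext
    show (Sp π, Tp π) = (S, T)
    rw [h1, h2]

lemma Sof_subset (n : ℕ) (l : List DyckStep) : Sof n l ⊆ Finset.range n :=
  Finset.filter_subset _ _

lemma Tof_subset (n : ℕ) (l : List DyckStep) : Tof n l ⊆ Finset.range n :=
  Finset.filter_subset _ _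

def toDyck (n : ℕ) (S T : Finset ℕ)
    (h : (word n S T).count U = (word n S T).count D ∧
      ∀ i, ((word n S T).take i).count D ≤ ((word n S T).take i).count U) : DyckWord :=
  ⟨word n S T, h.1, h.2⟩

lemma semilength_toDyck (n : ℕ) (S T : Finset ℕ) (h) :
    (toDyck n S T h).semilength = n := by
  have h2 := (toDyck n S T h).two_mul_semilength_eq_length
  have h3 : (toDyck n S T h).toList = word n S T := rfl
  rw [h3, length_word] at h2
  omega

noncomputable def MEquivDyck (n : ℕ) : M n ≃ {p : DyckWord // p.semilength = n} where
  toFun P :=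
    ⟨toDyck n P.1.1 P.1.2 ((isDyck_iff_dom P.2.1 P.2.2.1).mpr ⟨P.2.2.2.1, P.2.2.2.2⟩),
      semilength_toDyck n P.1.1 P.1.2 _⟩
  invFun Q :=
    have hlen : Q.1.toList.length = 2 * n := by
      rw [← Q.1.two_mul_semilength_eq_length, Q.2]
    have hd : (Sof n Q.1.toList).card = (Tof n Q.1.toList).card ∧
        ∀ x, ((Tof n Q.1.toList).filter (· ≤ x)).card ≤
          ((Sof n Q.1.toList).filter (· < x)).card := by
      apply (isDyck_iff_dom (Sof_subset n _) (Tof_subset n _)).mp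
      rw [word_Sof_Tof hlen]
      exact ⟨Q.1.count_U_eq_count_D, Q.1.count_D_le_count_U⟩
    ⟨(Sof n Q.1.toList, Tof n Q.1.toList),
      Sof_subset n _, Tof_subset n _, hd.1, hd.2⟩
  left_inv P := by
    apply Subtype.ext
    show (Sof n (word n P.1.1 P.1.2), Tof n (word n P.1.1 P.1.2)) = P.1
    rw [Sof_word P.2.1, Tof_word P.2.2.1]
  right_inv Q := by
    apply Subtype.ext
    apply DyckWord.ext
    have hlen : Q.1.toList.length = 2 * n := by
      rw [← Q.1.two_mul_semilength_eq_length, Q.2]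
    exact word_Sof_Tof hlen

end Av321

theorem card_avoids321_eq_catalan (n : ℕ) :
    Nat.card {π : Equiv.Perm (Fin n) // Avoids321 π} = catalan n := by
  rw [Av321.card_avoiders n, Nat.card_congr (Av321.MEquivDyck n), Nat.card_eq_fintype_card]
  exact DyckWord.card_dyckWord_semilength_eq_catalan n
end

section
/- For every natural number n, there exists a bijection between the set of permutations of Fin n that avoid the pattern 312 and the set of permutations of Fin n that avoid the pattern 321. -/
namespace AvoidAux

variable {n : ℕ}

/-- A positional valuation: earlier positions carry larger weight, so swapping a
descent strictly decreases the value. -/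
def pval (σ : Equiv.Perm (Fin n)) : ℕ :=
  ∑ i : Fin n, (σ i : ℕ) * (n + 2) ^ (n - 1 - (i : ℕ))

theorem pval_swap_lt {σ : Equiv.Perm (Fin n)} {j k : Fin n} (hjk : j < k) (h : σ k < σ j) :
    pval (σ * Equiv.swap j k) < pval σ := by
  classical
  set τ := σ * Equiv.swap j k with hτ
  have hτj : τ j = σ k := by simp [hτ, Equiv.Perm.mul_apply]
  have hτk : τ k = σ j := by simp [hτ, Equiv.Perm.mul_apply]
  have hkj : k ≠ j := ne_of_gt hjk
  have split : ∀ f : Equiv.Perm (Fin n), pval f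
      = (f j : ℕ) * (n + 2) ^ (n - 1 - (j : ℕ)) +
        ((f k : ℕ) * (n + 2) ^ (n - 1 - (k : ℕ)) +
          ∑ i ∈ (Finset.univ.erase j).erase k, (f i : ℕ) * (n + 2) ^ (n - 1 - (i : ℕ))) := by
    intro f
    rw [pval, ← Finset.add_sum_erase _ _ (Finset.mem_univ j),
        ← Finset.add_sum_erase _ _ (Finset.mem_erase.2 ⟨hkj, Finset.mem_univ k⟩)]
  have hsame : ∑ i ∈ (Finset.univ.erase j).erase k, (τ i : ℕ) * (n + 2) ^ (n - 1 - (i : ℕ))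
      = ∑ i ∈ (Finset.univ.erase j).erase k, (σ i : ℕ) * (n + 2) ^ (n - 1 - (i : ℕ)) := by
    refine Finset.sum_congr rfl fun t ht => ?_
    obtain ⟨htk, htj, -⟩ : t ≠ k ∧ t ≠ j ∧ True := by
      simp only [Finset.mem_erase] at ht; exact ⟨ht.1, ht.2.1, trivial⟩
    rw [hτ]
    simp [Equiv.Perm.mul_apply, Equiv.swap_apply_of_ne_of_ne htj htk]
  have hwlt : (n + 2) ^ (n - 1 - (k : ℕ)) < (n + 2) ^ (n - 1 - (j : ℕ)) := by
    have hk : (k : ℕ) < n := k.isLt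
    have hjk' : (j : ℕ) < (k : ℕ) := hjk
    exact Nat.pow_lt_pow_right (by omega) (by omega)
  have hvs : ((σ k : Fin n) : ℕ) < ((σ j : Fin n) : ℕ) := h
  have key := mul_add_mul_lt_mul_add_mul hvs hwlt
  rw [split τ, split σ, hsame, hτj, hτk]
  omega

/-- `i` is a left-to-right maximum position of `π`. -/
def IsMx (π : Equiv.Perm (Fin n)) (i : Fin n) : Prop := ∀ j, j < i → π j < π i

/-- Two permutations have the same left-to-right-maxima data. -/
def Rel (π σ : Equiv.Perm (Fin n)) : Prop :=
  (∀ i, IsMx π i ↔ IsMx σ i) ∧ ∀ i, IsMx π i → π i = σ i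

theorem Rel.refl (π : Equiv.Perm (Fin n)) : Rel π π := ⟨fun _ => Iff.rfl, fun _ _ => rfl⟩

theorem Rel.symm {π σ : Equiv.Perm (Fin n)} (h : Rel π σ) : Rel σ π :=
  ⟨fun i => (h.1 i).symm, fun i hi => ((h.2 i) ((h.1 i).2 hi)).symm⟩

theorem Rel.trans {π σ τ : Equiv.Perm (Fin n)} (h1 : Rel π σ) (h2 : Rel σ τ) : Rel π τ :=
  ⟨fun i => (h1.1 i).trans (h2.1 i), fun i hi => (h1.2 i hi).trans (h2.2 i ((h1.1 i).1 hi))⟩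

theorem not_isMx {π : Equiv.Perm (Fin n)} {i : Fin n} (h : ¬ IsMx π i) :
    ∃ j, j < i ∧ π i < π j := by
  simp only [IsMx, not_forall] at h
  obtain ⟨j, hj, hji⟩ := h
  refine ⟨j, hj, lt_of_le_of_ne (not_lt.1 hji) ?_⟩
  intro hEq
  exact absurd (π.injective hEq) (ne_of_lt hj).symm

/-- Below a non-maximum position there is a left-to-right maximum exceeding its value. -/
theorem exists_mx_gt {π : Equiv.Perm (Fin n)} {i : Fin n} (h : ¬ IsMx π i) :
    ∃ m, m < i ∧ IsMx π m ∧ π i < π m := by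
  obtain ⟨j, hj, hji⟩ := not_isMx h
  classical
  have hne : (Finset.univ.filter (fun t => t < i)).Nonempty :=
    ⟨j, by simpa using hj⟩
  obtain ⟨m, hm, hmax⟩ := Finset.exists_max_image _ (fun t => π t) hne
  simp only [Finset.mem_filter, Finset.mem_univ, true_and] at hm
  refine ⟨m, hm, ?_, ?_⟩
  · intro t ht
    have htm : π t ≤ π m := hmax t (by simp [ht.trans hm])
    refine lt_of_le_of_ne htm ?_
    intro hEq
    exact absurd (π.injective hEq) (ne_of_lt ht)
  · exact hji.trans_le (hmax j (by simp [hj]))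

/-- Swapping two entries both dominated by an earlier entry preserves LTR-max data. -/
theorem rel_swap (σ : Equiv.Perm (Fin n)) {m j k : Fin n}
    (hmj : m < j) (hjk : j < k) (hj : σ j < σ m) (hk : σ k < σ m) :
    Rel σ (σ * Equiv.swap j k) := by
  set τ := σ * Equiv.swap j k with hτ
  have hτj : τ j = σ k := by simp [hτ, Equiv.Perm.mul_apply]
  have hτk : τ k = σ j := by simp [hτ, Equiv.Perm.mul_apply]
  have hτo : ∀ t, t ≠ j → t ≠ k → τ t = σ t := by
    intro t h1 h2
    simp [hτ, Equiv.Perm.mul_apply, Equiv.swap_apply_of_ne_of_ne h1 h2]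
  have hiff : ∀ t, IsMx σ t ↔ IsMx τ t := by
    intro t
    rcases lt_trichotomy t j with htj | rfl | hjt
    · -- t < j : nothing below t is touched
      constructor <;> intro h s hs <;>
        [rw [hτo s (ne_of_lt (hs.trans htj)) (ne_of_lt ((hs.trans htj).trans hjk)),
            hτo t (ne_of_lt htj) (ne_of_lt (htj.trans hjk))] at *;
         rw [← hτo s (ne_of_lt (hs.trans htj)) (ne_of_lt ((hs.trans htj).trans hjk)),
            ← hτo t (ne_of_lt htj) (ne_of_lt (htj.trans hjk))]] <;>
        exact h s hs
    · -- t = j : both sides false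
      constructor <;> intro h
      · exact absurd hj (not_lt.2 (le_of_lt (h m hmj)))
      · have := h m hmj
        rw [hτo m (ne_of_lt hmj) (ne_of_lt (hmj.trans hjk)), hτj] at this
        exact absurd hk (not_lt.2 (le_of_lt this))
    · rcases lt_trichotomy t k with htk | rfl | hkt
      · -- j < t < k
        have hτt : τ t = σ t := hτo t (ne_of_gt hjt) (ne_of_lt htk)
        constructor <;> intro h s hs
        · rcases eq_or_ne s j with rfl | hsj
          · rw [hτj, hτt]
            exact hk.trans (h m (hmj.trans hjt))
          · have hsk : s ≠ k := ne_of_lt (hs.trans htk)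
            rw [hτo s hsj hsk, hτt]
            exact h s hs
        · rcases eq_or_ne s j with rfl | hsj
          · have := h m (hmj.trans hjt)
            rw [hτo m (ne_of_lt hmj) (ne_of_lt ((hmj.trans hjt).trans htk)), hτt] at this
            exact hj.trans this
          · have hsk : s ≠ k := ne_of_lt (hs.trans htk)
            have := h s hs
            rw [hτo s hsj hsk, hτt] at this
            exact this
      · -- t = k : both sides false
        constructor <;> intro h
        · exact absurd hk (not_lt.2 (le_of_lt (h m (hmj.trans hjk))))
        · have := h m (hmj.trans hjk)
          rw [hτo m (ne_of_lt hmj) (ne_of_lt (hmj.trans hjk)), hτk] at this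
          exact absurd hj (not_lt.2 (le_of_lt this))
      · -- k < t
        have hτt : τ t = σ t := hτo t (ne_of_gt (hjk.trans hkt)) (ne_of_gt hkt)
        constructor <;> intro h s hs
        · rcases eq_or_ne s j with rfl | hsj
          · rw [hτj, hτt]; exact h k hkt
          · rcases eq_or_ne s k with rfl | hsk
            · rw [hτk, hτt]; exact h j (hjk.trans hkt)
            · rw [hτo s hsj hsk, hτt]; exact h s hs
        · rcases eq_or_ne s j with rfl | hsj
          · have := h k hkt
            rw [hτk, hτt] at this
            exact this
          · rcases eq_or_ne s k with rfl | hsk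
            · have := h j (hjk.trans hkt)
              rw [hτj, hτt] at this
              exact this
            · have := h s hs
              rw [hτo s hsj hsk, hτt] at this
              exact this
  refine ⟨hiff, ?_⟩
  intro t ht
  have htj : t ≠ j := by
    rintro rfl
    exact absurd hj (not_lt.2 (le_of_lt (ht m hmj)))
  have htk : t ≠ k := by
    rintro rfl
    exact absurd hk (not_lt.2 (le_of_lt (ht m (hmj.trans hjk))))
  exact (hτo t htj htk).symm

/-- Uniqueness helper for 321-avoiders. -/
theorem uniq321_aux {π σ : Equiv.Perm (Fin n)} (hσ : Avoids321 σ) (hR : Rel π σ)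
    {i : Fin n} (hmin : ∀ t, t < i → π t = σ t) (hlt : π i < σ i) : False := by
  have hiπ : ¬ IsMx π i := fun h => absurd (hR.2 i h) (ne_of_lt hlt)
  have hiσ : ¬ IsMx σ i := fun h => hiπ ((hR.1 i).2 h)
  obtain ⟨k, hσk⟩ : ∃ k, σ k = π i := ⟨σ.symm (π i), σ.apply_symm_apply _⟩
  have hki : i < k := by
    rcases lt_trichotomy k i with h | rfl | h
    · exact absurd (π.injective ((hmin k h).trans hσk)) (ne_of_lt h)
    · exact absurd hσk (ne_of_gt hlt)
    · exact h
  obtain ⟨m, hmi, hmmx, hmgt⟩ := exists_mx_gt hiσ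
  exact hσ m i k hmi hki ⟨hmgt, hσk ▸ hlt⟩

/-- Uniqueness helper for 312-avoiders. -/
theorem uniq312_aux {π σ : Equiv.Perm (Fin n)} (hπ : Avoids312 π) (hR : Rel π σ)
    {i : Fin n} (hmin : ∀ t, t < i → π t = σ t) (hlt : π i < σ i) : False := by
  have hiπ : ¬ IsMx π i := fun h => absurd (hR.2 i h) (ne_of_lt hlt)
  have hiσ : ¬ IsMx σ i := fun h => hiπ ((hR.1 i).2 h)
  obtain ⟨k, hπk⟩ : ∃ k, π k = σ i := ⟨π.symm (σ i), π.apply_symm_apply _⟩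
  have hki : i < k := by
    rcases lt_trichotomy k i with h | rfl | h
    · exact absurd (σ.injective ((hmin k h).symm.trans hπk)) (ne_of_lt h)
    · exact absurd hπk (ne_of_lt hlt)
    · exact h
  obtain ⟨m, hmi, hmmx, hmgt⟩ := exists_mx_gt hiσ
  have hπm : π m = σ m := hR.2 m ((hR.1 m).2 hmmx)
  exact hπ m i k hmi hki ⟨hπk ▸ hlt, by rw [hπk, hπm]; exact hmgt⟩

/-- Two 321-avoiders with the same LTR-max data are equal. -/
theorem uniq321 {π σ : Equiv.Perm (Fin n)} (hπ : Avoids321 π) (hσ : Avoids321 σ)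
    (hR : Rel π σ) : π = σ := by
  classical
  by_contra hne
  have hs : (Finset.univ.filter (fun t => π t ≠ σ t)).Nonempty := by
    by_contra h
    rw [Finset.not_nonempty_iff_eq_empty, Finset.filter_eq_empty_iff] at h
    exact hne (Equiv.ext fun t => not_not.1 (h (Finset.mem_univ t)))
  obtain ⟨i, hi, hminI⟩ := Finset.exists_min_image _ id hs
  simp only [Finset.mem_filter, Finset.mem_univ, true_and] at hi
  have hmin : ∀ t, t < i → π t = σ t := by
    intro t ht
    by_contra h
    exact absurd (hminI t (by simp [h])) (not_le.2 ht)
  rcases lt_or_gt_of_ne hi with h | h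
  · exact uniq321_aux hσ hR hmin h
  · exact uniq321_aux hπ hR.symm (fun t ht => (hmin t ht).symm) h

/-- Two 312-avoiders with the same LTR-max data are equal. -/
theorem uniq312 {π σ : Equiv.Perm (Fin n)} (hπ : Avoids312 π) (hσ : Avoids312 σ)
    (hR : Rel π σ) : π = σ := by
  classical
  by_contra hne
  have hs : (Finset.univ.filter (fun t => π t ≠ σ t)).Nonempty := by
    by_contra h
    rw [Finset.not_nonempty_iff_eq_empty, Finset.filter_eq_empty_iff] at h
    exact hne (Equiv.ext fun t => not_not.1 (h (Finset.mem_univ t)))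
  obtain ⟨i, hi, hminI⟩ := Finset.exists_min_image _ id hs
  simp only [Finset.mem_filter, Finset.mem_univ, true_and] at hi
  have hmin : ∀ t, t < i → π t = σ t := by
    intro t ht
    by_contra h
    exact absurd (hminI t (by simp [h])) (not_le.2 ht)
  rcases lt_or_gt_of_ne hi with h | h
  · exact uniq312_aux hπ hR hmin h
  · exact uniq312_aux hσ hR.symm (fun t ht => (hmin t ht).symm) h

/-- Every LTR-max-data fiber contains a 321-avoider (its lex-min element). -/
theorem ex321 (π : Equiv.Perm (Fin n)) : ∃ σ, Avoids321 σ ∧ Rel π σ := by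
  classical
  set P := Finset.univ.filter (fun σ : Equiv.Perm (Fin n) => Rel π σ) with hP
  have hne : P.Nonempty := ⟨π, by simp [hP, Rel.refl]⟩
  obtain ⟨σ, hσP, hσmin⟩ := Finset.exists_min_image P pval hne
  have hRσ : Rel π σ := by simpa [hP] using hσP
  refine ⟨σ, ?_, hRσ⟩
  intro i j k hij hjk hpat
  obtain ⟨h1, h2⟩ := hpat
  have hrel : Rel σ (σ * Equiv.swap j k) := rel_swap σ hij hjk h1 (h2.trans h1)
  have hmem : σ * Equiv.swap j k ∈ P := by simp [hP, hRσ.trans hrel]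
  have hle := hσmin _ hmem
  exact absurd hle (not_le.2 (pval_swap_lt hjk h2))

/-- Every LTR-max-data fiber contains a 312-avoider (its lex-max element). -/
theorem ex312 (π : Equiv.Perm (Fin n)) : ∃ σ, Avoids312 σ ∧ Rel π σ := by
  classical
  set P := Finset.univ.filter (fun σ : Equiv.Perm (Fin n) => Rel π σ) with hP
  have hne : P.Nonempty := ⟨π, by simp [hP, Rel.refl]⟩
  obtain ⟨σ, hσP, hσmax⟩ := Finset.exists_max_image P pval hne
  have hRσ : Rel π σ := by simpa [hP] using hσP
  refine ⟨σ, ?_, hRσ⟩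
  intro i j k hij hjk hpat
  obtain ⟨h1, h2⟩ := hpat
  set τ := σ * Equiv.swap j k with hτdef
  have hrel : Rel σ τ := rel_swap σ hij hjk (h1.trans h2) h2
  have hmem : τ ∈ P := by simp [hP, hRσ.trans hrel]
  have hle := hσmax _ hmem
  have hττ : τ * Equiv.swap j k = σ := by
    rw [hτdef, mul_assoc, Equiv.swap_mul_self, mul_one]
  have hτjk : τ k < τ j := by
    have hτj : τ j = σ k := by simp [hτdef, Equiv.Perm.mul_apply]
    have hτk : τ k = σ j := by simp [hτdef, Equiv.Perm.mul_apply]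
    rw [hτj, hτk]; exact h1
  have := pval_swap_lt hjk hτjk
  rw [hττ] at this
  exact absurd hle (not_le.2 this)

end AvoidAux

theorem exists_equiv_avoids312_avoids321 (n : ℕ) :
    Nonempty ({π : Equiv.Perm (Fin n) // Avoids312 π} ≃
      {π : Equiv.Perm (Fin n) // Avoids321 π}) := by
  classical
  open AvoidAux in
  refine ⟨{
    toFun := fun π => ⟨(ex321 π.1).choose, (ex321 π.1).choose_spec.1⟩
    invFun := fun σ => ⟨(ex312 σ.1).choose, (ex312 σ.1).choose_spec.1⟩
    left_inv := ?_
    right_inv := ?_ }⟩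
  · rintro ⟨π, hπ⟩
    ext : 1
    dsimp only
    have h1 := (ex321 π).choose_spec.2
    have h2 := (ex312 (ex321 π).choose).choose_spec.2
    exact uniq312 (ex312 _).choose_spec.1 hπ (h1.trans h2).symm
  · rintro ⟨σ, hσ⟩
    ext : 1
    dsimp only
    have h1 := (ex312 σ).choose_spec.2
    have h2 := (ex321 (ex312 σ).choose).choose_spec.2
    exact uniq321 (ex321 _).choose_spec.1 hσ (h1.trans h2).symm
end

section
/- For every natural number n, there exists a bijection φ from the set of 312-avoiding permutations of Fin n to the set of 321-avoiding permutations of Fin n such that for every 312-avoiding permutation π, the permutations π and φ(π) have exactly the same left-to-right maxima: for every index i, i is a left-to-right maximum of π if and only if i is a left-to-right maximum of φ(π), and in that case π i = φ(π) i. -/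
/-- An index `i` is a left-to-right maximum of `π` if `π j < π i` for all `j < i`. -/
def IsLRMax {n : ℕ} (π : Equiv.Perm (Fin n)) (i : Fin n) : Prop :=
  ∀ j : Fin n, j < i → π j < π i

namespace SSrec

variable {n : ℕ}

instance (π : Equiv.Perm (Fin n)) : DecidablePred (IsLRMax π) := fun _ => by
  unfold IsLRMax; infer_instance

/-- prefix maximum of π over positions `≤ i` -/
def pm (π : Equiv.Perm (Fin n)) (i : Fin n) : Fin n :=
  ((Finset.univ.filter (fun j => j ≤ i)).image π).max'
    ⟨π i, Finset.mem_image_of_mem _ (by simp)⟩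

lemma le_pm (π : Equiv.Perm (Fin n)) {j i : Fin n} (h : j ≤ i) : π j ≤ pm π i :=
  Finset.le_max' _ _ (Finset.mem_image_of_mem _ (by simp [h]))

lemma pm_mono (π : Equiv.Perm (Fin n)) {i i' : Fin n} (h : i ≤ i') : pm π i ≤ pm π i' := by
  apply Finset.max'_le
  intro y hy
  simp only [Finset.mem_image, Finset.mem_filter, Finset.mem_univ, true_and] at hy
  obtain ⟨j, hj, rfl⟩ := hy
  exact le_pm π (le_trans hj h)

lemma pm_spec (π : Equiv.Perm (Fin n)) (i : Fin n) :
    ∃ m : Fin n, m ≤ i ∧ π m = pm π i ∧ IsLRMax π m := by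
  have hmem := Finset.max'_mem ((Finset.univ.filter (fun j => j ≤ i)).image π)
    ⟨π i, Finset.mem_image_of_mem _ (by simp)⟩
  simp only [Finset.mem_image, Finset.mem_filter, Finset.mem_univ, true_and] at hmem
  obtain ⟨m, hm, hme⟩ := hmem
  refine ⟨m, hm, hme, fun j hj => ?_⟩
  have h1 : π j ≤ π m := hme ▸ le_pm π (le_trans (le_of_lt hj) hm)
  exact lt_of_le_of_ne h1 (fun he => absurd (π.injective he) (ne_of_lt hj))

lemma record_iff_pm (π : Equiv.Perm (Fin n)) (i : Fin n) :
    IsLRMax π i ↔ π i = pm π i := by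
  constructor
  · intro h
    refine le_antisymm (le_pm π le_rfl) (Finset.max'_le _ _ _ ?_)
    intro y hy
    simp only [Finset.mem_image, Finset.mem_filter, Finset.mem_univ, true_and] at hy
    obtain ⟨j, hj, rfl⟩ := hy
    rcases eq_or_lt_of_le hj with rfl | hj
    · exact le_rfl
    · exact le_of_lt (h j hj)
  · intro h j hj
    have h1 : π j ≤ pm π i := le_pm π (le_of_lt hj)
    rw [← h] at h1
    exact lt_of_le_of_ne h1 (fun he => absurd (π.injective he) (ne_of_lt hj))

lemma nonrecord_lt_pm (π : Equiv.Perm (Fin n)) {i : Fin n} (h : ¬ IsLRMax π i) :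
    π i < pm π i :=
  lt_of_le_of_ne (le_pm π le_rfl) (fun he => h ((record_iff_pm π i).2 he))

lemma pm_lt_of_record (π : Equiv.Perm (Fin n)) {i j : Fin n} (hi : IsLRMax π i)
    (hj : j < i) : pm π j < π i := by
  obtain ⟨m, hm, hme, _⟩ := pm_spec π j
  exact hme ▸ hi m (lt_of_le_of_lt hm hj)

/-- `i ≤ pm π i` by counting -/
lemma le_pm_self (π : Equiv.Perm (Fin n)) (i : Fin n) : i ≤ pm π i := by
  by_contra h
  push_neg at h
  -- all of π '' [0,i] is ≤ pm π i < i : i+1 distinct values in Iic (pm π i) of size pm+1 ≤ i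
  have hsub : (Finset.univ.filter (fun j => j ≤ i)).image π ⊆ Finset.Iic (pm π i) := by
    intro y hy
    simp only [Finset.mem_image, Finset.mem_filter, Finset.mem_univ, true_and] at hy
    obtain ⟨j, hj, rfl⟩ := hy
    exact Finset.mem_Iic.2 (le_pm π hj)
  have hcard1 : ((Finset.univ.filter (fun j => j ≤ i)).image π).card = i.val + 1 := by
    rw [Finset.card_image_of_injective _ π.injective]
    have : (Finset.univ.filter (fun j => j ≤ i)) = Finset.Iic i := by
      ext x; simp
    rw [this, Fin.card_Iic]
  have hcard2 : (Finset.Iic (pm π i)).card = (pm π i).val + 1 := Fin.card_Iic _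
  have := Finset.card_le_card hsub
  omega

variable {n : ℕ}

/-- In a 312-avoider, at any position, an unused value below some earlier value is ≤ π i. -/
lemma max_char {π : Equiv.Perm (Fin n)} (h : Avoids312 π) (i v : Fin n)
    (hv : ∀ j : Fin n, j < i → π j ≠ v) (hm : ∃ m : Fin n, m < i ∧ v < π m) :
    v ≤ π i := by
  by_contra hlt
  push_neg at hlt  -- π i < v
  obtain ⟨m, hmi, hvm⟩ := hm
  set k := π.symm v with hk
  have hπk : π k = v := π.apply_symm_apply v
  have hik : i < k := by
    rcases lt_trichotomy k i with h1 | h1 | h1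
    · exact absurd hπk (hv k h1)
    · rw [h1] at hπk; exact absurd hπk (ne_of_lt hlt)
    · exact h1
  exact h m i k hmi hik ⟨hπk.symm ▸ hlt, hπk.symm ▸ hvm⟩

/-- In a 321-avoider, at a non-record position, π i is ≤ any unused value. -/
lemma min_char {π : Equiv.Perm (Fin n)} (h : Avoids321 π) (i v : Fin n)
    (hv : ∀ j : Fin n, j < i → π j ≠ v) (hi : ¬ IsLRMax π i) :
    π i ≤ v := by
  by_contra hlt
  push_neg at hlt  -- v < π i
  set k := π.symm v with hk
  have hπk : π k = v := π.apply_symm_apply v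
  have hik : i < k := by
    rcases lt_trichotomy k i with h1 | h1 | h1
    · exact absurd hπk (hv k h1)
    · rw [h1] at hπk; exact absurd hπk (fun he => absurd he.symm (ne_of_lt hlt))
    · exact h1
  unfold IsLRMax at hi
  push_neg at hi
  obtain ⟨m, hmi, hpm⟩ := hi
  exact h m i k hmi hik ⟨lt_of_le_of_ne hpm (fun he => absurd (π.injective he) (ne_of_gt hmi)), hπk.symm ▸ hlt⟩

def SameRec (π π' : Equiv.Perm (Fin n)) : Prop :=
  ∀ i : Fin n, (IsLRMax π i ↔ IsLRMax π' i) ∧ (IsLRMax π i → π i = π' i)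

lemma sameRec_symm {π π' : Equiv.Perm (Fin n)} (h : SameRec π π') : SameRec π' π :=
  fun i => ⟨(h i).1.symm, fun hr => ((h i).2 ((h i).1.2 hr)).symm⟩

lemma sameRec_trans {π π' π'' : Equiv.Perm (Fin n)} (h : SameRec π π') (h' : SameRec π' π'') :
    SameRec π π'' :=
  fun i => ⟨(h i).1.trans (h' i).1, fun hr => ((h i).2 hr).trans ((h' i).2 ((h i).1.1 hr))⟩

lemma uniq312 {π π' : Equiv.Perm (Fin n)} (h : Avoids312 π) (h' : Avoids312 π')
    (hrec : SameRec π π') : π = π' := by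
  have key : ∀ N : ℕ, ∀ i : Fin n, i.val = N → π i = π' i := by
    intro N
    induction N using Nat.strong_induction_on with
    | _ N ih =>
      intro i hiN
      have hprev : ∀ j : Fin n, j < i → π j = π' j := fun j hj =>
        ih j.val (hiN ▸ hj) j rfl
      by_cases hr : IsLRMax π i
      · exact (hrec i).2 hr
      · have hr' : ¬ IsLRMax π' i := fun hh => hr ((hrec i).1.2 hh)
        -- π' i ≤ π i
        have h1 : π' i ≤ π i := by
          apply max_char h i (π' i)
          · intro j hj he
            exact absurd (π'.injective (hprev j hj ▸ he)) (ne_of_lt hj)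
          · obtain ⟨m, hm, hme, hmrec⟩ := pm_spec π' i
            have hmi : m < i := lt_of_le_of_ne hm (by rintro rfl; exact hr' hmrec)
            have : π m = π' m := hprev m hmi
            exact ⟨m, hmi, this ▸ hme ▸ nonrecord_lt_pm π' hr'⟩
        have h2 : π i ≤ π' i := by
          apply max_char h' i (π i)
          · intro j hj he
            exact absurd (π.injective ((hprev j hj).symm ▸ he)) (ne_of_lt hj)
          · obtain ⟨m, hm, hme, hmrec⟩ := pm_spec π i
            have hmi : m < i := lt_of_le_of_ne hm (by rintro rfl; exact hr hmrec)
            have : π m = π' m := hprev m hmi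
            exact ⟨m, hmi, this ▸ hme ▸ nonrecord_lt_pm π hr⟩
        exact le_antisymm h2 h1
  exact Equiv.ext fun i => key i.val i rfl

lemma uniq321 {π π' : Equiv.Perm (Fin n)} (h : Avoids321 π) (h' : Avoids321 π')
    (hrec : SameRec π π') : π = π' := by
  have key : ∀ N : ℕ, ∀ i : Fin n, i.val = N → π i = π' i := by
    intro N
    induction N using Nat.strong_induction_on with
    | _ N ih =>
      intro i hiN
      have hprev : ∀ j : Fin n, j < i → π j = π' j := fun j hj =>
        ih j.val (hiN ▸ hj) j rfl
      by_cases hr : IsLRMax π i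
      · exact (hrec i).2 hr
      · have hr' : ¬ IsLRMax π' i := fun hh => hr ((hrec i).1.2 hh)
        have h1 : π i ≤ π' i := by
          apply min_char h i (π' i) _ hr
          intro j hj he
          exact absurd (π'.injective (hprev j hj ▸ he)) (ne_of_lt hj)
        have h2 : π' i ≤ π i := by
          apply min_char h' i (π i) _ hr'
          intro j hj he
          exact absurd (π.injective ((hprev j hj).symm ▸ he)) (ne_of_lt hj)
        exact le_antisymm h1 h2
  exact Equiv.ext fun i => key i.val i rfl

variable {n : ℕ}

def unusedInc (π : Equiv.Perm (Fin n)) (i : Fin n) : Fin n :=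
  if IsLRMax π i then π i
  else
    letI S : Finset (Fin n) :=
      Finset.univ \ ((Finset.univ.filter (fun j => j < i)).attach.image
        (fun j => unusedInc π j.1))
    if h : S.Nonempty then S.min' h else i
termination_by i.val
decreasing_by
  all_goals
    have := j.2
    simp only [Finset.mem_filter, Finset.mem_univ, true_and] at this
    exact this
def US (π : Equiv.Perm (Fin n)) (i : Fin n) : Finset (Fin n) :=
  Finset.univ \ ((Finset.univ.filter (fun j => j < i)).image (unusedInc π))

lemma attach_image (s : Finset (Fin n)) (f : Fin n → Fin n) :
    (s.attach.image (fun j => f j.1)) = s.image f := by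
  ext v; simp

lemma unusedInc_record {π : Equiv.Perm (Fin n)} {i : Fin n} (h : IsLRMax π i) :
    unusedInc π i = π i := by
  rw [unusedInc]; simp [h]

lemma US_nonempty (π : Equiv.Perm (Fin n)) (i : Fin n) : (US π i).Nonempty := by
  have h1 : ((Finset.univ.filter (fun j => j < i)).image (unusedInc π)).card ≤ i.val := by
    refine le_trans (Finset.card_image_le) ?_
    have : (Finset.univ.filter (fun j => j < i)) = Finset.Iio i := by ext x; simp
    rw [this, Fin.card_Iio]
  rw [US, Finset.sdiff_nonempty]
  intro hsub
  have := Finset.card_le_card hsub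
  simp only [Finset.card_univ, Fintype.card_fin] at this
  omega

lemma unusedInc_nonrecord {π : Equiv.Perm (Fin n)} {i : Fin n} (h : ¬ IsLRMax π i) :
    unusedInc π i = (US π i).min' (US_nonempty π i) := by
  conv_lhs => rw [unusedInc]
  rw [if_neg h]
  have : (Finset.univ \ ((Finset.univ.filter (fun j => j < i)).attach.image
      (fun j => unusedInc π j.1))) = US π i := by
    rw [attach_image]; rfl
  simp only [this]
  rw [dif_pos (US_nonempty π i)]

lemma mem_US {π : Equiv.Perm (Fin n)} {i v : Fin n} :
    v ∈ US π i ↔ ∀ j : Fin n, j < i → unusedInc π j ≠ v := by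
  simp [US]

lemma unusedInc_inv (π : Equiv.Perm (Fin n)) : ∀ i : Fin n,
    unusedInc π i ≤ pm π i ∧ (¬ IsLRMax π i → unusedInc π i < pm π i) ∧
      ∀ j : Fin n, j < i → unusedInc π j ≠ unusedInc π i := by
  have key : ∀ N : ℕ, ∀ i : Fin n, i.val = N →
      unusedInc π i ≤ pm π i ∧ (¬ IsLRMax π i → unusedInc π i < pm π i) ∧
      ∀ j : Fin n, j < i → unusedInc π j ≠ unusedInc π i := by
    intro N
    induction N using Nat.strong_induction_on with
    | _ N ih =>
      intro i hiN
      have IH : ∀ j : Fin n, j < i →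
          unusedInc π j ≤ pm π j ∧ (¬ IsLRMax π j → unusedInc π j < pm π j) ∧
          ∀ l : Fin n, l < j → unusedInc π l ≠ unusedInc π j :=
        fun j hj => ih j.val (hiN ▸ hj) j rfl
      by_cases hr : IsLRMax π i
      · rw [unusedInc_record hr]
        refine ⟨le_pm π le_rfl, fun hc => absurd hr hc, fun j hj => ?_⟩
        exact ne_of_lt (lt_of_le_of_lt (IH j hj).1 (pm_lt_of_record π hr hj))
      · rw [unusedInc_nonrecord hr]
        have hmem := Finset.min'_mem (US π i) (US_nonempty π i)
        have hne : ∀ j : Fin n, j < i → unusedInc π j ≠ (US π i).min' (US_nonempty π i) :=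
          mem_US.1 hmem
        -- find v ∈ US π i with v < pm π i
        set W := (Finset.univ.filter (fun j => j < i)).image (unusedInc π) with hW
        have hWsub : W ⊆ Finset.Iic (pm π i) := by
          intro y hy
          simp only [hW, Finset.mem_image, Finset.mem_filter, Finset.mem_univ, true_and] at hy
          obtain ⟨j, hj, rfl⟩ := hy
          exact Finset.mem_Iic.2 (le_trans (IH j hj).1 (pm_mono π (le_of_lt hj)))
        have hpmW : pm π i ∈ W := by
          obtain ⟨m, hm, hme, hmrec⟩ := pm_spec π i
          have hmi : m < i := lt_of_le_of_ne hm (by rintro rfl; exact hr hmrec)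
          simp only [hW, Finset.mem_image, Finset.mem_filter, Finset.mem_univ, true_and]
          exact ⟨m, hmi, (unusedInc_record hmrec).trans hme⟩
        have hWcard : W.card ≤ i.val := by
          refine le_trans (Finset.card_image_le) ?_
          have : (Finset.univ.filter (fun j => j < i)) = Finset.Iio i := by ext x; simp
          rw [this, Fin.card_Iio]
        have hex : ∃ v, v ∈ Finset.Iic (pm π i) ∧ v ∉ W := by
          by_contra hc
          push_neg at hc
          have hsub2 : Finset.Iic (pm π i) ⊆ W := fun v hv => hc v hv
          have := Finset.card_le_card hsub2
          rw [Fin.card_Iic] at this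
          have := le_pm_self π i
          have h3 : i.val ≤ (pm π i).val := this
          omega
        obtain ⟨v, hv1, hv2⟩ := hex
        have hvUS : v ∈ US π i := by
          rw [US]; exact Finset.mem_sdiff.2 ⟨Finset.mem_univ v, hv2⟩
        have hvlt : v < pm π i :=
          lt_of_le_of_ne (Finset.mem_Iic.1 hv1) (fun he => hv2 (he ▸ hpmW))
        have hmin : (US π i).min' (US_nonempty π i) ≤ v := Finset.min'_le _ _ hvUS
        exact ⟨le_of_lt (lt_of_le_of_lt hmin hvlt),
          fun _ => lt_of_le_of_lt hmin hvlt, hne⟩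
  exact fun i => key i.val i rfl

lemma unusedInc_injective (π : Equiv.Perm (Fin n)) : Function.Injective (unusedInc π) := by
  intro a b hab
  rcases lt_trichotomy a b with h | h | h
  · exact absurd hab ((unusedInc_inv π b).2.2 a h)
  · exact h
  · exact absurd hab.symm ((unusedInc_inv π a).2.2 b h)

noncomputable def permInc (π : Equiv.Perm (Fin n)) : Equiv.Perm (Fin n) :=
  Equiv.ofBijective _ (Finite.injective_iff_bijective.mp (unusedInc_injective π))

lemma permInc_apply (π : Equiv.Perm (Fin n)) (i : Fin n) :
    permInc π i = unusedInc π i := rfl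

lemma permInc_sameRec (π : Equiv.Perm (Fin n)) : SameRec π (permInc π) := by
  intro i
  constructor
  · constructor
    · intro hr j hj
      rw [permInc_apply, permInc_apply, unusedInc_record hr]
      exact lt_of_le_of_lt (unusedInc_inv π j).1 (pm_lt_of_record π hr hj)
    · intro hr
      by_contra hc
      have h1 : unusedInc π i < pm π i := (unusedInc_inv π i).2.1 hc
      obtain ⟨m, hm, hme, hmrec⟩ := pm_spec π i
      have hmi : m < i := lt_of_le_of_ne hm (by rintro rfl; exact hc hmrec)
      have h2 : permInc π m = pm π i := by
        rw [permInc_apply, unusedInc_record hmrec, hme]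
      have h3 := hr m hmi
      rw [h2, permInc_apply] at h3
      exact absurd h3 (not_lt.2 (le_of_lt h1))
  · intro hr
    rw [permInc_apply, unusedInc_record hr]

lemma permInc_avoids321 (π : Equiv.Perm (Fin n)) : Avoids321 (permInc π) := by
  intro i j k hij hjk ⟨h1, h2⟩
  -- h1 : permInc π j < permInc π i, h2 : permInc π k < permInc π j
  have hj : ¬ IsLRMax π j := by
    intro hr
    have := ((permInc_sameRec π j).1.1 hr) i hij
    exact absurd h1 (not_lt.2 (le_of_lt this))
  rw [permInc_apply, permInc_apply] at h2
  rw [unusedInc_nonrecord hj] at h2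
  have hk : unusedInc π k ∈ US π j := by
    rw [mem_US]
    intro l hl he
    exact absurd (unusedInc_injective π he) (ne_of_lt (lt_trans hl hjk))
  exact absurd (Finset.min'_le _ _ hk) (not_le.2 h2)
def unusedDec (π : Equiv.Perm (Fin n)) (i : Fin n) : Fin n :=
  if IsLRMax π i then π i
  else
    letI S : Finset (Fin n) :=
      (Finset.univ \ ((Finset.univ.filter (fun j => j < i)).attach.image
        (fun j => unusedDec π j.1))).filter (fun v => v < pm π i)
    if h : S.Nonempty then S.max' h else i
termination_by i.val
decreasing_by
  all_goals
    have := j.2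
    simp only [Finset.mem_filter, Finset.mem_univ, true_and] at this
    exact this

def TD (π : Equiv.Perm (Fin n)) (i : Fin n) : Finset (Fin n) :=
  (Finset.univ \ ((Finset.univ.filter (fun j => j < i)).image (unusedDec π))).filter
    (fun v => v < pm π i)

lemma unusedDec_record {π : Equiv.Perm (Fin n)} {i : Fin n} (h : IsLRMax π i) :
    unusedDec π i = π i := by
  rw [unusedDec]; simp [h]

lemma unusedDec_nonrecord {π : Equiv.Perm (Fin n)} {i : Fin n} (h : ¬ IsLRMax π i)
    (hne : (TD π i).Nonempty) :
    unusedDec π i = (TD π i).max' hne := by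
  conv_lhs => rw [unusedDec]
  rw [if_neg h]
  have he : ((Finset.univ \ ((Finset.univ.filter (fun j => j < i)).attach.image
      (fun j => unusedDec π j.1))).filter (fun v => v < pm π i)) = TD π i := by
    rw [attach_image]; rfl
  simp only [he]
  rw [dif_pos hne]

lemma mem_TD {π : Equiv.Perm (Fin n)} {i v : Fin n} :
    v ∈ TD π i ↔ (∀ j : Fin n, j < i → unusedDec π j ≠ v) ∧ v < pm π i := by
  simp [TD]

lemma unusedDec_inv (π : Equiv.Perm (Fin n)) : ∀ i : Fin n,
    unusedDec π i ≤ pm π i ∧ (¬ IsLRMax π i → unusedDec π i < pm π i) ∧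
      ∀ j : Fin n, j < i → unusedDec π j ≠ unusedDec π i := by
  have key : ∀ N : ℕ, ∀ i : Fin n, i.val = N →
      unusedDec π i ≤ pm π i ∧ (¬ IsLRMax π i → unusedDec π i < pm π i) ∧
      ∀ j : Fin n, j < i → unusedDec π j ≠ unusedDec π i := by
    intro N
    induction N using Nat.strong_induction_on with
    | _ N ih =>
      intro i hiN
      have IH : ∀ j : Fin n, j < i →
          unusedDec π j ≤ pm π j ∧ (¬ IsLRMax π j → unusedDec π j < pm π j) ∧
          ∀ l : Fin n, l < j → unusedDec π l ≠ unusedDec π j :=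
        fun j hj => ih j.val (hiN ▸ hj) j rfl
      by_cases hr : IsLRMax π i
      · rw [unusedDec_record hr]
        refine ⟨le_pm π le_rfl, fun hc => absurd hr hc, fun j hj => ?_⟩
        exact ne_of_lt (lt_of_le_of_lt (IH j hj).1 (pm_lt_of_record π hr hj))
      · set W := (Finset.univ.filter (fun j => j < i)).image (unusedDec π) with hW
        have hWsub : W ⊆ Finset.Iic (pm π i) := by
          intro y hy
          simp only [hW, Finset.mem_image, Finset.mem_filter, Finset.mem_univ, true_and] at hy
          obtain ⟨j, hj, rfl⟩ := hy
          exact Finset.mem_Iic.2 (le_trans (IH j hj).1 (pm_mono π (le_of_lt hj)))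
        have hpmW : pm π i ∈ W := by
          obtain ⟨m, hm, hme, hmrec⟩ := pm_spec π i
          have hmi : m < i := lt_of_le_of_ne hm (by rintro rfl; exact hr hmrec)
          simp only [hW, Finset.mem_image, Finset.mem_filter, Finset.mem_univ, true_and]
          exact ⟨m, hmi, (unusedDec_record hmrec).trans hme⟩
        have hWcard : W.card ≤ i.val := by
          refine le_trans (Finset.card_image_le) ?_
          have : (Finset.univ.filter (fun j => j < i)) = Finset.Iio i := by ext x; simp
          rw [this, Fin.card_Iio]
        have hex : ∃ v, v ∈ Finset.Iio (pm π i) ∧ v ∉ W := by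
          by_contra hc
          push_neg at hc
          have hsub2 : insert (pm π i) (Finset.Iio (pm π i)) ⊆ W := by
            intro v hv
            rcases Finset.mem_insert.1 hv with rfl | hv
            · exact hpmW
            · exact hc v hv
          have hcard := Finset.card_le_card hsub2
          rw [Finset.card_insert_of_notMem (by simp), Fin.card_Iio] at hcard
          have h3 : i.val ≤ (pm π i).val := le_pm_self π i
          omega
        obtain ⟨v, hv1, hv2⟩ := hex
        have hvTD : v ∈ TD π i := by
          rw [TD]
          exact Finset.mem_filter.2 ⟨Finset.mem_sdiff.2 ⟨Finset.mem_univ v, hv2⟩,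
            Finset.mem_Iio.1 hv1⟩
        have hne : (TD π i).Nonempty := ⟨v, hvTD⟩
        rw [unusedDec_nonrecord hr hne]
        have hmem := Finset.max'_mem (TD π i) hne
        rw [mem_TD] at hmem
        exact ⟨le_of_lt hmem.2, fun _ => hmem.2, hmem.1⟩
  exact fun i => key i.val i rfl

lemma unusedDec_injective (π : Equiv.Perm (Fin n)) : Function.Injective (unusedDec π) := by
  intro a b hab
  rcases lt_trichotomy a b with h | h | h
  · exact absurd hab ((unusedDec_inv π b).2.2 a h)
  · exact h
  · exact absurd hab.symm ((unusedDec_inv π a).2.2 b h)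

noncomputable def permDec (π : Equiv.Perm (Fin n)) : Equiv.Perm (Fin n) :=
  Equiv.ofBijective _ (Finite.injective_iff_bijective.mp (unusedDec_injective π))

lemma permDec_apply (π : Equiv.Perm (Fin n)) (i : Fin n) :
    permDec π i = unusedDec π i := rfl

lemma TD_nonempty {π : Equiv.Perm (Fin n)} {i : Fin n} (hr : ¬ IsLRMax π i) :
    (TD π i).Nonempty := by
  have h1 : unusedDec π i < pm π i := (unusedDec_inv π i).2.1 hr
  have h2 : ∀ j : Fin n, j < i → unusedDec π j ≠ unusedDec π i :=
    (unusedDec_inv π i).2.2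
  exact ⟨unusedDec π i, mem_TD.2 ⟨h2, h1⟩⟩

lemma permDec_sameRec (π : Equiv.Perm (Fin n)) : SameRec π (permDec π) := by
  intro i
  constructor
  · constructor
    · intro hr j hj
      rw [permDec_apply, permDec_apply, unusedDec_record hr]
      exact lt_of_le_of_lt (unusedDec_inv π j).1 (pm_lt_of_record π hr hj)
    · intro hr
      by_contra hc
      have h1 : unusedDec π i < pm π i := (unusedDec_inv π i).2.1 hc
      obtain ⟨m, hm, hme, hmrec⟩ := pm_spec π i
      have hmi : m < i := lt_of_le_of_ne hm (by rintro rfl; exact hc hmrec)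
      have h2 : permDec π m = pm π i := by
        rw [permDec_apply, unusedDec_record hmrec, hme]
      have h3 := hr m hmi
      rw [h2, permDec_apply] at h3
      exact absurd h3 (not_lt.2 (le_of_lt h1))
  · intro hr
    rw [permDec_apply, unusedDec_record hr]

lemma permDec_avoids312 (π : Equiv.Perm (Fin n)) : Avoids312 (permDec π) := by
  intro i j k hij hjk ⟨h1, h2⟩
  -- h1 : permDec π j < permDec π k, h2 : permDec π k < permDec π i
  have hj : ¬ IsLRMax π j := by
    intro hr
    have := ((permDec_sameRec π j).1.1 hr) i hij
    exact absurd (lt_trans h1 (lt_trans h2 this)) (lt_irrefl _)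
  rw [permDec_apply, permDec_apply] at h1
  rw [unusedDec_nonrecord hj (TD_nonempty hj)] at h1
  have hk : unusedDec π k ∈ TD π j := by
    rw [mem_TD]
    refine ⟨fun l hl he => absurd (unusedDec_injective π he)
      (ne_of_lt (lt_trans hl hjk)), ?_⟩
    -- unusedDec π k < pm π j
    have hik : permDec π k < permDec π i := h2
    have h4 : permDec π i ≤ pm π i := (unusedDec_inv π i).1
    exact lt_of_lt_of_le hik (le_trans h4 (pm_mono π (le_of_lt hij)))
  exact absurd (Finset.le_max' _ _ hk) (not_le.2 h1)
noncomputable def Phi : {π : Equiv.Perm (Fin n) // Avoids312 π} →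
    {π : Equiv.Perm (Fin n) // Avoids321 π} :=
  fun p => ⟨permInc p.1, permInc_avoids321 p.1⟩

noncomputable def Psi : {π : Equiv.Perm (Fin n) // Avoids321 π} →
    {π : Equiv.Perm (Fin n) // Avoids312 π} :=
  fun p => ⟨permDec p.1, permDec_avoids312 p.1⟩

lemma Psi_Phi (p : {π : Equiv.Perm (Fin n) // Avoids312 π}) : Psi (Phi p) = p := by
  apply Subtype.ext
  exact uniq312 (permDec_avoids312 _) p.2
    (sameRec_symm (sameRec_trans (permInc_sameRec p.1) (permDec_sameRec _)))

lemma Phi_Psi (p : {π : Equiv.Perm (Fin n) // Avoids321 π}) : Phi (Psi p) = p := by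
  apply Subtype.ext
  exact uniq321 (permInc_avoids321 _) p.2
    (sameRec_symm (sameRec_trans (permDec_sameRec p.1) (permInc_sameRec _)))

end SSrec

theorem exists_equiv_avoids312_avoids321_preserving_records (n : ℕ) :
    ∃ φ : {π : Equiv.Perm (Fin n) // Avoids312 π} ≃
        {π : Equiv.Perm (Fin n) // Avoids321 π},
      ∀ π : {π : Equiv.Perm (Fin n) // Avoids312 π}, ∀ i : Fin n,
        (IsLRMax π.1 i ↔ IsLRMax (φ π).1 i) ∧
        (IsLRMax π.1 i → π.1 i = (φ π).1 i) := by
  refine ⟨⟨SSrec.Phi, SSrec.Psi, SSrec.Psi_Phi, SSrec.Phi_Psi⟩, ?_⟩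
  intro π i
  exact SSrec.permInc_sameRec π.1 i
end

section
/- A permutation π of Fin n avoids the pattern 321 if and only if Fin n can be partitioned into two sets A and B such that π is strictly increasing on A and strictly increasing on B (i.e., π is an interleaving of two increasing subsequences). -/
theorem avoids321_iff_interleaving (n : ℕ) (π : Equiv.Perm (Fin n)) :
    Avoids321 π ↔
      ∃ A B : Set (Fin n), A ∪ B = Set.univ ∧ A ∩ B = ∅ ∧
        (∀ i ∈ A, ∀ j ∈ A, i < j → π i < π j) ∧
        (∀ i ∈ B, ∀ j ∈ B, i < j → π i < π j) := by
  constructor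
  · intro h
    refine ⟨{i | ∀ j, j < i → π j < π i}, {i | ∀ j, j < i → π j < π i}ᶜ,
      Set.union_compl_self _, Set.inter_compl_self _, ?_, ?_⟩
    · intro i hi j hj hij
      exact hj i hij
    · intro i hi j hj hij
      simp only [Set.mem_compl_iff, Set.mem_setOf_eq, not_forall] at hi
      obtain ⟨i', hi'lt, hi'⟩ := hi
      push_neg at hi'
      by_contra hle
      push_neg at hle
      have h1 : π i < π i' := lt_of_le_of_ne hi' (fun e => absurd (π.injective e) (ne_of_gt hi'lt))
      have h2 : π j < π i := lt_of_le_of_ne hle (fun e => absurd (π.injective e) (ne_of_gt hij))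
      exact h i' i j hi'lt hij ⟨h1, h2⟩
  · rintro ⟨A, B, hU, hI, hA, hB⟩ i j k hij hjk ⟨h1, h2⟩
    have mem : ∀ x : Fin n, x ∈ A ∨ x ∈ B := by
      intro x
      have := Set.eq_univ_iff_forall.mp hU x
      exact this
    have same : ∀ x y : Fin n, x < y → π y < π x → ¬(x ∈ A ∧ y ∈ A) ∧ ¬(x ∈ B ∧ y ∈ B) := by
      intro x y hxy hyx
      exact ⟨fun ⟨hx, hy⟩ => absurd (hA x hx y hy hxy) (not_lt.mpr hyx.le),
             fun ⟨hx, hy⟩ => absurd (hB x hx y hy hxy) (not_lt.mpr hyx.le)⟩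
    have hik : π k < π i := h2.trans h1
    rcases mem i with hi | hi <;> rcases mem j with hj | hj <;> rcases mem k with hk | hk
    · exact (same i j hij h1).1 ⟨hi, hj⟩
    · exact (same i j hij h1).1 ⟨hi, hj⟩
    · exact (same i k (hij.trans hjk) hik).1 ⟨hi, hk⟩
    · exact (same j k hjk h2).2 ⟨hj, hk⟩
    · exact (same j k hjk h2).1 ⟨hj, hk⟩
    · exact (same i k (hij.trans hjk) hik).2 ⟨hi, hk⟩
    · exact (same i j hij h1).2 ⟨hi, hj⟩
    · exact (same i j hij h1).2 ⟨hi, hj⟩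
end

section
/- A permutation π of Fin n avoids the pattern 321 if and only if π is strictly increasing on the set of indices that are not left-to-right maxima of π, i.e., for all indices i < j such that neither i nor j is a left-to-right maximum of π, one has π i < π j. -/
theorem avoids321_iff_nonrecords_increasing (n : ℕ) (π : Equiv.Perm (Fin n)) :
    Avoids321 π ↔
      ∀ i j : Fin n, i < j → ¬IsLRMax π i → ¬IsLRMax π j → π i < π j := by
  constructor
  · intro h i j hij hi _
    by_contra hle
    push_neg at hle
    have hne : π j ≠ π i := fun e => (hij.ne (π.injective e.symm)).elim
    have hji : π j < π i := lt_of_le_of_ne hle hne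
    simp only [IsLRMax, not_forall] at hi
    obtain ⟨k, hk, hk2⟩ := hi
    push_neg at hk2
    have hne2 : π i ≠ π k := fun e => (hk.ne (π.injective e.symm)).elim
    exact h k i j hk hij ⟨lt_of_le_of_ne hk2 hne2, hji⟩
  · intro h i j k hij hjk ⟨h1, h2⟩
    have hj : ¬IsLRMax π j := fun hm => absurd (hm i hij) (not_lt.2 h1.le)
    have hk : ¬IsLRMax π k := fun hm => absurd (hm j hjk) (not_lt.2 h2.le)
    exact absurd (h j k hjk hj hk) (not_lt.2 h2.le)
end

section
/- Cycle lemma: for every natural number n and every list w of length 2n+1 consisting of exactly n+1 entries equal to 1 and n entries equal to -1 (as integers), there is exactly one rotation amount r with 0 ≤ r < 2n+1 such that every nonempty prefix of the cyclic rotation of w by r has positive sum. -/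
private lemma count_two_le (a b : ℤ) (hab : a ≠ b) :
    ∀ w : List ℤ, w.count a + w.count b ≤ w.length := by
  intro w
  induction w with
  | nil => simp
  | cons c t ih =>
    simp only [List.count_cons, List.length_cons]
    split_ifs with hA hB hB
    · exact absurd ((eq_of_beq hA).symm.trans (eq_of_beq hB)) hab
    · omega
    · omega
    · omega

private lemma mem_pm (w : List ℤ) (h : w.count 1 + w.count (-1) = w.length) :
    ∀ x ∈ w, x = 1 ∨ x = -1 := by
  intro x hx
  by_contra hc
  push_neg at hc
  have e1 : (w.erase x).count 1 = w.count 1 := List.count_erase_of_ne (Ne.symm hc.1)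
  have e2 : (w.erase x).count (-1) = w.count (-1) := List.count_erase_of_ne (Ne.symm hc.2)
  have e3 : (w.erase x).length = w.length - 1 := List.length_erase_of_mem hx
  have e4 := count_two_le 1 (-1) (by norm_num) (w.erase x)
  have e5 : 0 < w.length := List.length_pos_iff.mpr (List.ne_nil_of_mem hx)
  omega

private lemma sum_pm (w : List ℤ) (h : ∀ x ∈ w, x = 1 ∨ x = -1) :
    w.sum = (w.count 1 : ℤ) - w.count (-1) := by
  induction w with
  | nil => simp
  | cons a t ih =>
    have ht := ih (fun x hx => h x (List.mem_cons_of_mem a hx))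
    rcases h a (List.mem_cons_self) with rfl | rfl <;>
      simp [List.count_cons, ht] <;> push_cast <;> ring

theorem cycle_lemma (n : ℕ) (w : List ℤ)
    (hlen : w.length = 2 * n + 1)
    (h1 : w.count 1 = n + 1) (h2 : w.count (-1) = n) :
    ∃! r : ℕ, r < 2 * n + 1 ∧
      ∀ p : List ℤ, p <+: (w.drop r ++ w.take r) → p ≠ [] → 0 < p.sum := by
  set m := 2 * n + 1 with hm
  have hmem : ∀ x ∈ w, x = 1 ∨ x = -1 := mem_pm w (by omega)
  have hsum : w.sum = 1 := by rw [sum_pm w hmem, h1, h2]; push_cast; ring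
  set P : ℕ → ℤ := fun k => ((w.take k).sum) with hP
  have hP0 : P 0 = 0 := by simp [hP]
  have hPm : ∀ k, m ≤ k → P k = 1 := by
    intro k hk
    simp only [hP]
    rw [List.take_of_length_le (by omega : w.length ≤ k), hsum]
  have hrotsum : ∀ r j, r ≤ m → j ≤ m →
      ((w.drop r ++ w.take r).take j).sum = P (r + j) - P r + P (j - (m - r)) := by
    intro r j hr hj
    rw [List.take_append, List.sum_append]
    have e1 : w.take (r + j) = w.take r ++ (w.drop r).take j := List.take_add (l := w) (i := r) (j := j)
    have e2 : P (r + j) = P r + ((w.drop r).take j).sum := by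
      simp only [hP]; rw [e1, List.sum_append]
    have e3 : ((w.take r).take (j - (w.drop r).length)).sum = P (j - (m - r)) := by
      rw [List.length_drop, hlen]
      rw [List.take_take, Nat.min_eq_left (by omega)]
    rw [e3]
    omega
  have hlenrot : ∀ r, r ≤ m → (w.drop r ++ w.take r).length = m := by
    intro r hr; simp [hlen]; omega
  have key : ∀ r, r < m → ((∀ p, p <+: (w.drop r ++ w.take r) → p ≠ [] → 0 < p.sum) ↔
      ((∀ i, i < m → P r ≤ P i) ∧ (∀ i, r < i → i < m → P r < P i))) := by
    intro r hr
    constructor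
    · intro hgood
      have strict : ∀ i, r < i → i < m → P r < P i := by
        intro i hi1 hi2
        have hj1 : 1 ≤ i - r := by omega
        have hjm : i - r ≤ m := by omega
        have hpne : (w.drop r ++ w.take r).take (i - r) ≠ [] :=
          List.length_pos_iff.mp (by rw [List.length_take, hlenrot r hr.le]; omega)
        have hp := hgood _ (List.take_prefix _ _) hpne
        rw [hrotsum r (i - r) hr.le hjm] at hp
        have ea : r + (i - r) = i := by omega
        have eb : i - r - (m - r) = 0 := by omega
        rw [ea, eb, hP0] at hp
        omega
      refine ⟨?_, strict⟩
      intro i hi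
      rcases Nat.lt_or_ge r i with hir | hir
      · exact (strict i hir hi).le
      · set j := m - r + i with hj
        have hj1 : 1 ≤ j := by omega
        have hjm : j ≤ m := by omega
        have hpne : (w.drop r ++ w.take r).take j ≠ [] :=
          List.length_pos_iff.mp (by rw [List.length_take, hlenrot r hr.le]; omega)
        have hp := hgood _ (List.take_prefix _ _) hpne
        rw [hrotsum r j hr.le hjm] at hp
        rw [hPm (r + j) (by omega)] at hp
        have eb : j - (m - r) = i := by omega
        rw [eb] at hp
        omega
    · rintro ⟨hweak, hstrict⟩ p hp hpne
      have hple : p.length ≤ m := by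
        have := hp.length_le
        rw [hlenrot r hr.le] at this
        exact this
      have hp1 : 1 ≤ p.length := List.length_pos_iff.mpr hpne
      have hpe : p = (w.drop r ++ w.take r).take p.length := List.prefix_iff_eq_take.mp hp
      rw [hpe, hrotsum r p.length hr.le hple]
      by_cases hc : r + p.length < m
      · have h0 : p.length - (m - r) = 0 := by omega
        rw [h0, hP0]
        have := hstrict (r + p.length) (by omega) hc
        omega
      · rw [hPm (r + p.length) (by omega)]
        have := hweak (p.length - (m - r)) (by omega)
        omega
  have hmpos : 0 < m := by omega
  set Sgood := (Finset.range m).filter (fun i => ∀ j ∈ Finset.range m, P i ≤ P j) with hS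
  have hSne : Sgood.Nonempty := by
    obtain ⟨i, hi, hmin⟩ := Finset.exists_min_image (Finset.range m) P
      ⟨0, Finset.mem_range.mpr hmpos⟩
    exact ⟨i, Finset.mem_filter.mpr ⟨hi, hmin⟩⟩
  set r := Sgood.max' hSne with hrdef
  have hrS : r ∈ Sgood := Sgood.max'_mem hSne
  rw [hS, Finset.mem_filter] at hrS
  have hrm : r < m := Finset.mem_range.mp hrS.1
  have hweak : ∀ i, i < m → P r ≤ P i := fun i hi => hrS.2 i (Finset.mem_range.mpr hi)
  have hstrict : ∀ i, r < i → i < m → P r < P i := by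
    intro i hi1 hi2
    by_contra hc
    push_neg at hc
    have hmemS : i ∈ Sgood := Finset.mem_filter.mpr
      ⟨Finset.mem_range.mpr hi2, fun j hj => le_trans hc (hrS.2 j hj)⟩
    have := Finset.le_max' Sgood i hmemS
    omega
  refine ⟨r, ⟨hrm, (key r hrm).mpr ⟨hweak, hstrict⟩⟩, ?_⟩
  rintro r' ⟨hr'm, hgood'⟩
  obtain ⟨hweak', hstrict'⟩ := (key r' hr'm).mp hgood'
  by_contra hne
  rcases Nat.lt_or_ge r' r with h | h
  · have a1 := hstrict' r h hrm
    have a2 := hweak r' hr'm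
    omega
  · have h' : r < r' := lt_of_le_of_ne h (Ne.symm hne)
    have a1 := hstrict r' h' hr'm
    have a2 := hweak' r hrm
    omega
end

section
/- For every natural number n, the number of peakless weak Dyck paths of size n — that is, lists w with entries in {1, 0, -1} (as integers) such that the total sum of w is 0, every prefix sum of w is nonnegative, no entry equal to 1 is immediately followed by an entry equal to -1, and the number of entries equal to 1 plus the number of entries equal to 0 equals n — is the n-th Catalan number. -/
/-- A peakless weak Dyck path of size `n`: a list with entries in `{1, 0, -1} ⊆ ℤ`,
total sum `0`, all prefix sums nonnegative, no entry `1` immediately followed by `-1`,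
and (number of `1`s) + (number of `0`s) equal to `n`. -/
def IsPeaklessWeakDyckPath (n : ℕ) (w : List ℤ) : Prop :=
  (∀ x ∈ w, x = 1 ∨ x = 0 ∨ x = -1) ∧
  w.sum = 0 ∧
  (∀ p : List ℤ, p <+: w → 0 ≤ p.sum) ∧
  (∀ i : ℕ, ¬(w[i]? = some 1 ∧ w[i + 1]? = some (-1))) ∧
  w.count 1 + w.count 0 = n

open List DyckStep


/-- Expand: map `1 ↦ U`, `0 ↦ UD`, `-1 ↦ D`. -/
def pwdG : List ℤ → List DyckStep
  | [] => []
  | a :: rest => if a = 1 then U :: pwdG rest else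
      if a = 0 then U :: D :: pwdG rest else D :: pwdG rest

/-- Collapse: map each `UD` factor to `0`, remaining `U ↦ 1`, `D ↦ -1`. -/
def pwdF : List DyckStep → List ℤ
  | [] => []
  | U :: D :: rest => 0 :: pwdF rest
  | U :: rest => 1 :: pwdF rest
  | D :: rest => -1 :: pwdF rest

@[simp] lemma pwdG_nil : pwdG [] = [] := rfl
@[simp] lemma pwdG_one (t) : pwdG (1 :: t) = U :: pwdG t := by simp [pwdG]
@[simp] lemma pwdG_zero (t) : pwdG (0 :: t) = U :: D :: pwdG t := by norm_num [pwdG]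
@[simp] lemma pwdG_neg (t) : pwdG (-1 :: t) = D :: pwdG t := by norm_num [pwdG]

@[simp] lemma pwdF_nil : pwdF [] = [] := rfl
@[simp] lemma pwdF_UD (l) : pwdF (U :: D :: l) = 0 :: pwdF l := rfl
@[simp] lemma pwdF_D (l) : pwdF (D :: l) = -1 :: pwdF l := by cases l <;> rfl
@[simp] lemma pwdF_UU (l) : pwdF (U :: U :: l) = 1 :: pwdF (U :: l) := rfl
@[simp] lemma pwdF_Usingle : pwdF [U] = [1] := rfl

lemma pwdF_pwdG (w : List ℤ) (hw : ∀ x ∈ w, x = 1 ∨ x = 0 ∨ x = -1)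
    (hp : ∀ i : ℕ, ¬(w[i]? = some 1 ∧ w[i + 1]? = some (-1))) :
    pwdF (pwdG w) = w := by
  induction w with
  | nil => rfl
  | cons a t ih =>
    have ht : ∀ x ∈ t, x = 1 ∨ x = 0 ∨ x = -1 := fun x hx => hw x (mem_cons_of_mem _ hx)
    have hpt : ∀ i : ℕ, ¬(t[i]? = some 1 ∧ t[i + 1]? = some (-1)) := fun i => hp (i + 1)
    have iht := ih ht hpt
    rcases hw a mem_cons_self with h1 | h0 | hm
    · subst h1
      have hhd : t[0]? ≠ some (-1) := fun h => hp 0 ⟨rfl, h⟩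
      cases t with
      | nil => simp
      | cons b t' =>
        rcases ht b mem_cons_self with hb | hb | hb <;> subst hb
        · simp only [pwdG_one, pwdF_UU] at iht ⊢; rw [iht]
        · simp only [pwdG_one, pwdG_zero, pwdF_UU] at iht ⊢; rw [iht]
        · simp at hhd
    · subst h0; simp [iht]
    · subst hm; simp [iht]

lemma pwdG_pwdF (l : List DyckStep) : pwdG (pwdF l) = l := by
  induction l using pwdF.induct with
  | case1 => rfl
  | case2 rest ih => simp [ih]
  | case3 rest h ih =>
    cases rest with
    | nil => simp
    | cons s r =>
      cases s
      · simpa using ih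
      · exact absurd rfl (h r)
  | case4 rest ih => simp [ih]

lemma pwdG_count_U (w : List ℤ) (hw : ∀ x ∈ w, x = 1 ∨ x = 0 ∨ x = -1) :
    (pwdG w).count U = w.count 1 + w.count 0 := by
  induction w with
  | nil => rfl
  | cons a t ih =>
    have ht := fun x hx => hw x (mem_cons_of_mem a hx)
    rcases hw a mem_cons_self with h | h | h <;> subst h <;>
      simp [count_cons, ih ht] <;> omega

lemma pwdG_count_D (w : List ℤ) (hw : ∀ x ∈ w, x = 1 ∨ x = 0 ∨ x = -1) :
    (pwdG w).count D = w.count (-1) + w.count 0 := by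
  induction w with
  | nil => rfl
  | cons a t ih =>
    have ht := fun x hx => hw x (mem_cons_of_mem a hx)
    rcases hw a mem_cons_self with h | h | h <;> subst h <;>
      simp [count_cons, ih ht] <;> omega

lemma sum_eq_counts (w : List ℤ) (hw : ∀ x ∈ w, x = 1 ∨ x = 0 ∨ x = -1) :
    w.sum = (w.count 1 : ℤ) - (w.count (-1) : ℤ) := by
  induction w with
  | nil => rfl
  | cons a t ih =>
    have ht := fun x hx => hw x (mem_cons_of_mem a hx)
    rcases hw a mem_cons_self with h | h | h <;> subst h <;>
      simp [count_cons, ih ht] <;> push_cast <;> ring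

lemma pwdG_prefix (w : List ℤ) (hw : ∀ x ∈ w, x = 1 ∨ x = 0 ∨ x = -1)
    (p : List DyckStep) (hp : p <+: pwdG w) :
    ∃ q, q <+: w ∧ (p = pwdG q ∨ p = pwdG q ++ [U]) := by
  induction w generalizing p with
  | nil => exact ⟨[], prefix_refl _, Or.inl (by simpa using hp)⟩
  | cons a t ih =>
    have ht := fun x hx => hw x (mem_cons_of_mem a hx)
    rcases hw a mem_cons_self with h | h | h <;> subst h
    · rcases p with _ | ⟨b, p0⟩
      · exact ⟨[], nil_prefix, Or.inl rfl⟩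
      · rw [pwdG_one] at hp
        obtain ⟨rfl, hp0⟩ := cons_prefix_cons.mp hp
        obtain ⟨q0, hq0, hcase⟩ := ih ht p0 hp0
        exact ⟨1 :: q0, cons_prefix_cons.mpr ⟨rfl, hq0⟩, by
          rcases hcase with h | h <;> [left; right] <;> simp [h]⟩
    · rcases p with _ | ⟨b, p0⟩
      · exact ⟨[], nil_prefix, Or.inl rfl⟩
      · rw [pwdG_zero] at hp
        obtain ⟨rfl, hp0⟩ := cons_prefix_cons.mp hp
        rcases p0 with _ | ⟨c, p1⟩
        · exact ⟨[], nil_prefix, Or.inr rfl⟩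
        · obtain ⟨rfl, hp1⟩ := cons_prefix_cons.mp hp0
          obtain ⟨q0, hq0, hcase⟩ := ih ht p1 hp1
          exact ⟨0 :: q0, cons_prefix_cons.mpr ⟨rfl, hq0⟩, by
            rcases hcase with h | h <;> [left; right] <;> simp [h]⟩
    · rcases p with _ | ⟨b, p0⟩
      · exact ⟨[], nil_prefix, Or.inl rfl⟩
      · rw [pwdG_neg] at hp
        obtain ⟨rfl, hp0⟩ := cons_prefix_cons.mp hp
        obtain ⟨q0, hq0, hcase⟩ := ih ht p0 hp0
        exact ⟨-1 :: q0, cons_prefix_cons.mpr ⟨rfl, hq0⟩, by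
          rcases hcase with h | h <;> [left; right] <;> simp [h]⟩

lemma pwdF_prefix (l : List DyckStep) (p : List ℤ) (hp : p <+: pwdF l) :
    ∃ q, q <+: l ∧ p = pwdF q := by
  induction l using pwdF.induct generalizing p with
  | case1 => exact ⟨[], prefix_refl _, by simpa using hp⟩
  | case2 rest ih =>
    rcases p with _ | ⟨b, p0⟩
    · exact ⟨[], nil_prefix, rfl⟩
    · rw [pwdF_UD] at hp
      obtain ⟨rfl, hp0⟩ := cons_prefix_cons.mp hp
      obtain ⟨q0, hq0, rfl⟩ := ih p0 hp0
      exact ⟨U :: D :: q0, cons_prefix_cons.mpr ⟨rfl, cons_prefix_cons.mpr ⟨rfl, hq0⟩⟩, rfl⟩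
  | case3 rest h ih =>
    rcases p with _ | ⟨b, p0⟩
    · exact ⟨[], nil_prefix, rfl⟩
    · have hF : pwdF (U :: rest) = 1 :: pwdF rest := by
        cases rest with
        | nil => rfl
        | cons s r =>
          cases s
          · rfl
          · exact absurd rfl (h r)
      rw [hF] at hp
      obtain ⟨rfl, hp0⟩ := cons_prefix_cons.mp hp
      obtain ⟨q0, hq0, rfl⟩ := ih p0 hp0
      refine ⟨U :: q0, cons_prefix_cons.mpr ⟨rfl, hq0⟩, ?_⟩
      cases q0 with
      | nil => rfl
      | cons s r =>
        cases s
        · rfl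
        · obtain ⟨s', hs'⟩ := hq0
          exact (h (r ++ s') (by rw [← hs']; rfl)).elim
  | case4 rest ih =>
    rcases p with _ | ⟨b, p0⟩
    · exact ⟨[], nil_prefix, rfl⟩
    · rw [pwdF_D] at hp
      obtain ⟨rfl, hp0⟩ := cons_prefix_cons.mp hp
      obtain ⟨q0, hq0, rfl⟩ := ih p0 hp0
      exact ⟨D :: q0, cons_prefix_cons.mpr ⟨rfl, hq0⟩, rfl⟩

lemma pwdF_U (rest : List DyckStep) (h : ∀ r, rest ≠ D :: r) :
    pwdF (U :: rest) = 1 :: pwdF rest := by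
  cases rest with
  | nil => rfl
  | cons s r =>
    cases s
    · rfl
    · exact absurd rfl (h r)

lemma pwdF_mem (l : List DyckStep) : ∀ x ∈ pwdF l, x = 1 ∨ x = 0 ∨ x = -1 := by
  induction l using pwdF.induct with
  | case1 => simp
  | case2 rest ih => simpa using ih
  | case3 rest h ih =>
    have hF := pwdF_U rest (fun r hr => h r hr)
    rw [hF]; simpa using ih
  | case4 rest ih => simpa using ih

lemma pwdF_count1 (l : List DyckStep) :
    (pwdF l).count 1 + (pwdF l).count 0 = l.count U := by
  induction l using pwdF.induct with
  | case1 => rfl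
  | case2 rest ih => simp [count_cons, ih]; omega
  | case3 rest h ih =>
    have hF := pwdF_U rest (fun r hr => h r hr)
    rw [hF]; simp [count_cons, ih]; omega
  | case4 rest ih => simp [count_cons, ih]

lemma pwdF_countm1 (l : List DyckStep) :
    (pwdF l).count (-1) + (pwdF l).count 0 = l.count D := by
  induction l using pwdF.induct with
  | case1 => rfl
  | case2 rest ih => simp [count_cons, ih]; omega
  | case3 rest h ih =>
    have hF := pwdF_U rest (fun r hr => h r hr)
    rw [hF]; simp [count_cons, ih]
  | case4 rest ih => simp [count_cons, ih]; omega

lemma pwdF_peakless (l : List DyckStep) :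
    ∀ i : ℕ, ¬((pwdF l)[i]? = some 1 ∧ (pwdF l)[i + 1]? = some (-1)) := by
  induction l using pwdF.induct with
  | case1 => simp
  | case2 rest ih =>
    intro i
    cases i with
    | zero => simp
    | succ j => exact ih j
  | case3 rest h ih =>
    have hF := pwdF_U rest (fun r hr => h r hr)
    rw [hF]
    intro i
    cases i with
    | zero =>
      rintro ⟨-, h2⟩
      cases rest with
      | nil => simp at h2
      | cons s r =>
        cases s
        · cases r with
          | nil => simp at h2
          | cons s' r' =>
            cases s' <;> simp at h2
        · exact absurd rfl (h r)
    | succ j => exact ih j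
  | case4 rest ih =>
    intro i
    cases i with
    | zero => simp
    | succ j => exact ih j


def pwdEquiv (n : ℕ) :
    {w : List ℤ // IsPeaklessWeakDyckPath n w} ≃ {p : DyckWord // p.semilength = n} where
  toFun w := by
    obtain ⟨w, hw, hs, hpre, hpk, hn⟩ := w
    refine ⟨⟨pwdG w, ?_, ?_⟩, ?_⟩
    · rw [pwdG_count_U w hw, pwdG_count_D w hw]
      have := sum_eq_counts w hw
      rw [hs] at this
      omega
    · intro i
      have hpref : (pwdG w).take i <+: pwdG w := take_prefix _ _
      obtain ⟨q, hq, hcase⟩ := pwdG_prefix w hw _ hpref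
      have hqmem : ∀ x ∈ q, x = 1 ∨ x = 0 ∨ x = -1 := fun x hx => hw x (hq.subset hx)
      have hqsum := hpre q hq
      rw [sum_eq_counts q hqmem] at hqsum
      have hcount : (q.count (-1) : ℤ) ≤ q.count 1 := by linarith
      have hcount' : q.count (-1) ≤ q.count 1 := by exact_mod_cast hcount
      have hU := pwdG_count_U q hqmem
      have hD := pwdG_count_D q hqmem
      rcases hcase with h | h <;> rw [h] <;> simp [count_append] <;> omega
    · show (pwdG w).count U = n
      rw [pwdG_count_U w hw]; exact hn
  invFun p := by
    obtain ⟨⟨l, hUD, hpre⟩, hn⟩ := p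
    refine ⟨pwdF l, pwdF_mem l, ?_, ?_, pwdF_peakless l, ?_⟩
    · have h1 := pwdF_count1 l
      have h2 := pwdF_countm1 l
      rw [sum_eq_counts _ (pwdF_mem l)]
      have : (pwdF l).count 1 = (pwdF l).count (-1) := by omega
      rw [this]; ring
    · intro p hp
      obtain ⟨q, hq, rfl⟩ := pwdF_prefix l p hp
      have hqt : q = l.take q.length := prefix_iff_eq_take.mp hq
      have hc := hpre q.length
      rw [← hqt] at hc
      have h1 := pwdF_count1 q
      have h2 := pwdF_countm1 q
      rw [sum_eq_counts _ (pwdF_mem q)]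
      have : (pwdF q).count (-1) ≤ (pwdF q).count 1 := by omega
      have := Nat.cast_le (α := ℤ).mpr this
      linarith
    · have := pwdF_count1 l
      rw [this]; exact hn
  left_inv w := by
    obtain ⟨w, hw, hs, hpre, hpk, hn⟩ := w
    exact Subtype.ext (pwdF_pwdG w hw hpk)
  right_inv p := by
    obtain ⟨⟨l, hUD, hpre⟩, hn⟩ := p
    exact Subtype.ext (DyckWord.ext (pwdG_pwdF l))


theorem card_peaklessWeakDyckPath_eq_catalan (n : ℕ) :
    Nat.card {w : List ℤ // IsPeaklessWeakDyckPath n w} = catalan n := by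
  rw [Nat.card_congr (pwdEquiv n), Nat.card_eq_fintype_card,
    DyckWord.card_dyckWord_semilength_eq_catalan]
end

section
/- A 312-avoiding permutation of Fin n is uniquely determined by its left-to-right maxima: if π and σ are permutations of Fin n that both avoid the pattern 312, every index i is a left-to-right maximum of π if and only if it is a left-to-right maximum of σ, and π and σ agree on all left-to-right maxima, then π = σ. -/
private lemma key312 {n : ℕ} (π : Equiv.Perm (Fin n)) (hπ : Avoids312 π) {i j u : Fin n}
    (hj : j < i) (hu : π i < u) (huj : u < π j) : ∃ k, k < i ∧ π k = u := by
  refine ⟨π.symm u, ?_, π.apply_symm_apply u⟩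
  rcases lt_trichotomy (π.symm u) i with h | h | h
  · exact h
  · exfalso; rw [← h, π.apply_symm_apply] at hu; exact lt_irrefl u hu
  · exact absurd ⟨by rwa [π.apply_symm_apply], by rwa [π.apply_symm_apply]⟩
      (hπ j i (π.symm u) hj h)

private lemma onesided312 {n : ℕ} (π σ : Equiv.Perm (Fin n)) (hσ : Avoids312 σ)
    {i m : Fin n} (hm : m < i) (hmi : π i < π m)
    (hagree : ∀ j, j < i → π j = σ j) : ¬ σ i < π i := by
  intro hlt
  obtain ⟨k, hk, hke⟩ := key312 σ hσ hm hlt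
    (by rw [← hagree m hm]; exact hmi)
  rw [← hagree k hk] at hke
  exact absurd (π.injective hke) (ne_of_lt hk)

theorem avoids312_determined_by_records {n : ℕ} (π σ : Equiv.Perm (Fin n))
    (hπ : Avoids312 π) (hσ : Avoids312 σ)
    (hrec : ∀ i : Fin n, IsLRMax π i ↔ IsLRMax σ i)
    (hval : ∀ i : Fin n, IsLRMax π i → π i = σ i) :
    π = σ := by
  have main : ∀ m : ℕ, ∀ i : Fin n, i.val = m → π i = σ i := by
    intro m
    induction m using Nat.strong_induction_on with
    | _ m ih =>
      intro i him
      by_cases h : IsLRMax π i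
      · exact hval i h
      · have hagree : ∀ j, j < i → π j = σ j := fun j hj =>
          ih j.val (by rw [← him]; exact hj) j rfl
        obtain ⟨a, ha, hai⟩ : ∃ a, a < i ∧ π i < π a := by
          simp only [IsLRMax, not_forall] at h
          obtain ⟨j, hj, hji⟩ := h
          exact ⟨j, hj, lt_of_le_of_ne (not_lt.mp hji)
            (fun he => absurd (π.injective he) (ne_of_gt hj))⟩
        have h2 : ¬ IsLRMax σ i := fun hs => h ((hrec i).mpr hs)
        obtain ⟨b, hb, hbi⟩ : ∃ b, b < i ∧ σ i < σ b := by
          simp only [IsLRMax, not_forall] at h2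
          obtain ⟨j, hj, hji⟩ := h2
          exact ⟨j, hj, lt_of_le_of_ne (not_lt.mp hji)
            (fun he => absurd (σ.injective he) (ne_of_gt hj))⟩
        have h1 := onesided312 π σ hσ ha hai hagree
        have h3 := onesided312 σ π hπ hb hbi (fun j hj => (hagree j hj).symm)
        exact le_antisymm (not_lt.mp h1) (not_lt.mp h3)
  exact Equiv.ext fun i => main i.val i rfl
end

section
/- A 321-avoiding permutation of Fin n is uniquely determined by its left-to-right maxima: if π and σ are permutations of Fin n that both avoid the pattern 321, every index i is a left-to-right maximum of π if and only if it is a left-to-right maximum of σ, and π and σ agree on all left-to-right maxima, then π = σ. -/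
theorem avoids321_determined_by_records {n : ℕ} (π σ : Equiv.Perm (Fin n))
    (hπ : Avoids321 π) (hσ : Avoids321 σ)
    (hrec : ∀ i : Fin n, IsLRMax π i ↔ IsLRMax σ i)
    (hval : ∀ i : Fin n, IsLRMax π i → π i = σ i) :
    π = σ := by
  classical
  -- non-records appear in increasing order in a 321-avoiding permutation
  have hmono : ∀ (τ : Equiv.Perm (Fin n)), Avoids321 τ → ∀ i j : Fin n,
      ¬ IsLRMax τ i → i < j → τ i < τ j := by
    intro τ hτ i j hi hij
    simp only [IsLRMax, not_forall] at hi
    obtain ⟨k, hk, hki⟩ := hi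
    have hik : τ i < τ k := by
      rcases lt_or_eq_of_le (not_lt.mp hki) with h | h
      · exact h
      · exact absurd (τ.injective h) (ne_of_lt hk).symm
    by_contra h
    have hji : τ j < τ i := by
      rcases lt_or_eq_of_le (not_lt.mp h) with h' | h'
      · exact h'
      · exact absurd (τ.injective h') (ne_of_lt hij).symm
    exact hτ k i j hk hij ⟨hik, hji⟩
  set S : Finset (Fin n) := Finset.univ.filter (fun i => ¬ IsLRMax π i) with hSdef
  have hmemS : ∀ i, i ∈ S ↔ ¬ IsLRMax π i := by
    intro i; simp [hSdef]
  have hmemSc : ∀ i, i ∈ Sᶜ ↔ IsLRMax π i := by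
    intro i; simp [hSdef]
  have himg : ∀ (τ : Equiv.Perm (Fin n)) (A : Finset (Fin n)) (x : Fin n),
      x ∈ A.image τ ↔ τ.symm x ∈ A := by
    intro τ A x
    constructor
    · rw [Finset.mem_image]; rintro ⟨a, ha, rfl⟩; simpa using ha
    · intro h; exact Finset.mem_image.mpr ⟨τ.symm x, h, by simp⟩
  have hR : (Sᶜ).image π = (Sᶜ).image σ := by
    apply Finset.image_congr
    intro i hi
    exact hval i ((hmemSc i).mp hi)
  have hT : S.image σ = S.image π := by
    ext x
    rw [himg σ, himg π]
    have h1 : σ.symm x ∈ S ↔ x ∉ (Sᶜ).image σ := by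
      rw [himg]; simp
    have h2 : π.symm x ∈ S ↔ x ∉ (Sᶜ).image π := by
      rw [himg]; simp
    rw [h1, h2, hR]
  set T : Finset (Fin n) := S.image π with hTdef
  have hTcard : T.card = S.card := Finset.card_image_of_injective _ π.injective
  set e := S.orderIsoOfFin (rfl : S.card = S.card) with hedef
  have hf : ∀ x : Fin S.card, π (e x) ∈ T := by
    intro x; exact Finset.mem_image_of_mem _ (e x).2
  have hg : ∀ x : Fin S.card, σ (e x) ∈ T := by
    intro x; rw [← hT]; exact Finset.mem_image_of_mem _ (e x).2
  have hfmono : StrictMono (fun x => π (e x)) := by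
    intro x y hxy
    exact hmono π hπ (e x) (e y) ((hmemS _).mp (e x).2) (e.strictMono hxy)
  have hgmono : StrictMono (fun x => σ (e x)) := by
    intro x y hxy
    exact hmono σ hσ (e x) (e y) ((hrec _).not.mp ((hmemS _).mp (e x).2)) (e.strictMono hxy)
  have hfeq := Finset.orderEmbOfFin_unique hTcard hf hfmono
  have hgeq := Finset.orderEmbOfFin_unique hTcard hg hgmono
  ext i
  by_cases hi : IsLRMax π i
  · exact congrArg Fin.val (hval i hi)
  · have hiS : i ∈ S := (hmemS i).mpr hi
    have h1 := congrFun hfeq (e.symm ⟨i, hiS⟩)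
    have h2 := congrFun hgeq (e.symm ⟨i, hiS⟩)
    have : π (e (e.symm ⟨i, hiS⟩)) = σ (e (e.symm ⟨i, hiS⟩)) := by
      exact h1.trans h2.symm
    simp only [OrderIso.apply_symm_apply] at this
    exact congrArg Fin.val this
end
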